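/- arXiv:1111.2239 — 6 statements merged into one kernel-verified Lean document; each statement's English description precedes it below -/
import Mathlib

section
/- Let I be a small category, C a 2-category, and (F, ψ) : X → X' a left transformation between oplax functors X, X' : I → C. Then (F, ψ) is an equivalence in the 2-category Oplax(I, C) — that is, there exists a left transformation (E, φ) : X' → X together with invertible modifications id_X ⇒ (E, φ)∘(F, ψ) and id_{X'} ⇒ (F, ψ)∘(E, φ) — if and only if both of the following hold: (1) for every object i of I, the 1-morphism F(i) : X(i) → X'(i) is an equivalence in C; and (2) for every morphism a of I, the 2-morphism ψ(a) is invertible. -/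
/-!
Statement 1: a left transformation `(F, ψ) : X → X'` between oplax functors
`X, X' : I → C` is an equivalence in the 2-category `Oplax(I, C)` if and only if
every `F(i)` is an equivalence in `C` and every `ψ(a)` is an invertible 2-morphism.
-/

open CategoryTheory Bicategory

universe w₂ v₂ u₂ v₁ u₁

/-- Data of an oplax functor from a category `I` to a 2-category `C`. -/
structure OplaxData (I : Type u₁) [Category.{v₁} I] (C : Type u₂) [Bicategory.{w₂, v₂} C] where
  obj : I → C
  map : ∀ {i j : I}, (i ⟶ j) → (obj i ⟶ obj j)
  eta : ∀ i : I, map (𝟙 i) ⟶ 𝟙 (obj i)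
  theta : ∀ {i j k : I} (a : i ⟶ j) (b : j ⟶ k), map (a ≫ b) ⟶ map a ≫ map b

variable {I : Type u₁} [Category.{v₁} I] {C : Type u₂} [Bicategory.{w₂, v₂} C]
  [Bicategory.Strict C]

/-- The axioms for an oplax functor. -/
def OplaxData.IsOplax (X : OplaxData I C) : Prop :=
  (∀ {i j : I} (a : i ⟶ j),
      X.theta (𝟙 i) a ≫ (X.eta i ▷ X.map a)
        = eqToHom (by rw [Category.id_comp, Category.id_comp])) ∧
  (∀ {i j : I} (a : i ⟶ j),
      X.theta a (𝟙 j) ≫ (X.map a ◁ X.eta j)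
        = eqToHom (by rw [Category.comp_id, Category.comp_id])) ∧
  (∀ {i j k l : I} (a : i ⟶ j) (b : j ⟶ k) (c : k ⟶ l),
      X.theta a (b ≫ c) ≫ (X.map a ◁ X.theta b c)
        = eqToHom (by rw [Category.assoc]) ≫ X.theta (a ≫ b) c ≫ (X.theta a b ▷ X.map c) ≫
            eqToHom (Category.assoc _ _ _))

/-- Data of a left transformation `(F, ψ) : X → X'`. -/
structure LTData (X X' : OplaxData I C) where
  app : ∀ i : I, X.obj i ⟶ X'.obj i
  psi : ∀ {i j : I} (a : i ⟶ j), app i ≫ X'.map a ⟶ X.map a ≫ app j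

/-- The axioms for a left transformation. -/
def LTData.IsLT {X X' : OplaxData I C} (F : LTData X X') : Prop :=
  (∀ i : I,
      F.psi (𝟙 i) ≫ (X.eta i ▷ F.app i)
        = (F.app i ◁ X'.eta i) ≫ eqToHom (by rw [Category.comp_id, Category.id_comp])) ∧
  (∀ {i j k : I} (a : i ⟶ j) (b : j ⟶ k),
      (F.app i ◁ X'.theta a b) ≫ eqToHom (Category.assoc _ _ _).symm ≫
          (F.psi a ▷ X'.map b) ≫ eqToHom (Category.assoc _ _ _) ≫ (X.map a ◁ F.psi b)
        = F.psi (a ≫ b) ≫ (X.theta a b ▷ F.app k) ≫ eqToHom (Category.assoc _ _ _))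

/-- The condition for a family of 2-morphisms to be a modification. -/
def IsModification {X X' : OplaxData I C} (F F' : LTData X X')
    (z : ∀ i : I, F.app i ⟶ F'.app i) : Prop :=
  ∀ {i j : I} (a : i ⟶ j), (z i ▷ X'.map a) ≫ F'.psi a = F.psi a ≫ (X.map a ◁ z j)

/-- The identity left transformation. -/
def LTData.id (X : OplaxData I C) : LTData X X where
  app i := 𝟙 (X.obj i)
  psi a := eqToHom (by rw [Category.id_comp, Category.comp_id])

/-- The composite of left transformations `F : X → X'` and `F' : X' → X''`. -/
def LTData.comp {X X' X'' : OplaxData I C} (F : LTData X X') (F' : LTData X' X'') :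
    LTData X X'' where
  app i := F.app i ≫ F'.app i
  psi {i j} a :=
    eqToHom (Category.assoc _ _ _) ≫ (F.app i ◁ F'.psi a) ≫
      eqToHom (Category.assoc _ _ _).symm ≫ (F.psi a ▷ F'.app j) ≫
      eqToHom (Category.assoc _ _ _)

/-- `(F, ψ)` is an equivalence in the 2-category `Oplax(I, C)`: there is a left
transformation `(E, φ) : X' → X` together with invertible modifications
`id_X ⇒ (E, φ)∘(F, ψ)` and `id_{X'} ⇒ (F, ψ)∘(E, φ)`. -/
def LTData.IsEquivalenceInOplax {X X' : OplaxData I C} (F : LTData X X') : Prop :=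
  F.IsLT ∧
  ∃ (E : LTData X' X), E.IsLT ∧
    (∃ z : ∀ i : I, (LTData.id X).app i ⟶ (F.comp E).app i,
      IsModification (LTData.id X) (F.comp E) z ∧ ∀ i, IsIso (z i)) ∧
    (∃ w : ∀ i : I, (LTData.id X').app i ⟶ (E.comp F).app i,
      IsModification (LTData.id X') (E.comp F) w ∧ ∀ i, IsIso (w i))

/-- A 1-morphism `f : x → y` in a 2-category is an equivalence if there are
`g : y → x` and invertible 2-morphisms `f ≫ g ⟶ 𝟙 x` and `g ≫ f ⟶ 𝟙 y`. -/
def IsEquivalence1Cell {x y : C} (f : x ⟶ y) : Prop :=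
  ∃ (g : y ⟶ x), (∃ α : f ≫ g ⟶ 𝟙 x, IsIso α) ∧ (∃ β : g ≫ f ⟶ 𝟙 y, IsIso β)


/-! ### Auxiliary general-bicategory machinery (added for the proof) -/

section GeneralBicat

universe w v u

variable {B : Type u} [Bicategory.{w, v} B]

section
variable {P Q P' Q' : B}

/-- The mate of `ψi` under half-adjoint-equivalence data. -/
def mateAux (g : P' ⟶ P) (x : P ⟶ Q) (x' : P' ⟶ Q') (f' : Q ⟶ Q') (g' : Q' ⟶ Q)
    (f : P ⟶ P') (u' : 𝟙 Q ⟶ f' ≫ g') (c : g ≫ f ⟶ 𝟙 P')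
    (ψi : x ≫ f' ⟶ f ≫ x') : g ≫ x ⟶ x' ≫ g' :=
  𝟙 _ ⊗≫ (g ≫ x) ◁ u' ⊗≫ g ◁ ψi ▷ g' ⊗≫ c ▷ (x' ≫ g') ⊗≫ 𝟙 _

theorem jlem (g : P' ⟶ P) (x : P ⟶ Q) (x' : P' ⟶ Q') (f' : Q ⟶ Q') (g' : Q' ⟶ Q)
    (f : P ⟶ P') (u : 𝟙 P ⟶ f ≫ g) (c : g ≫ f ⟶ 𝟙 P') (u' : 𝟙 Q ⟶ f' ≫ g')
    (ψi : x ≫ f' ⟶ f ≫ x')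
    (T1 : leftZigzag u c = (λ_ f).hom ≫ (ρ_ f).inv) :
    𝟙 x ⊗≫ u ▷ x ⊗≫ f ◁ mateAux g x x' f' g' f u' c ψi
      = 𝟙 x ⊗≫ x ◁ u' ⊗≫ ψi ▷ g' ⊗≫ 𝟙 (f ≫ x' ≫ g') := by
  dsimp only [mateAux]
  calc 𝟙 x ⊗≫ u ▷ x ⊗≫ f ◁ (𝟙 _ ⊗≫ (g ≫ x) ◁ u' ⊗≫ g ◁ ψi ▷ g' ⊗≫ c ▷ (x' ≫ g') ⊗≫ 𝟙 _)
      = 𝟙 x ⊗≫ (u ▷ (x ≫ 𝟙 Q) ≫ (f ≫ g) ◁ (x ◁ u')) ⊗≫ f ◁ g ◁ ψi ▷ g'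
          ⊗≫ f ◁ c ▷ (x' ≫ g') ⊗≫ 𝟙 _ := by bicategory
    _ = 𝟙 x ⊗≫ x ◁ u' ⊗≫ (u ▷ ((x ≫ f') ≫ g') ≫ (f ≫ g) ◁ (ψi ▷ g'))
          ⊗≫ f ◁ c ▷ (x' ≫ g') ⊗≫ 𝟙 _ := by rw [← whisker_exchange]; bicategory
    _ = 𝟙 x ⊗≫ x ◁ u' ⊗≫ ψi ▷ g' ⊗≫ (leftZigzag u c) ▷ (x' ≫ g') ⊗≫ 𝟙 _ := by
        rw [← whisker_exchange]; dsimp only [leftZigzag, bicategoricalComp]; bicategory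
    _ = 𝟙 x ⊗≫ x ◁ u' ⊗≫ ψi ▷ g' ⊗≫ 𝟙 (f ≫ x' ≫ g') := by rw [T1]; bicategory

theorem mzlem (g : P' ⟶ P) (x : P ⟶ Q) (x' : P' ⟶ Q') (f' : Q ⟶ Q') (g' : Q' ⟶ Q)
    (f : P ⟶ P') (u : 𝟙 P ⟶ f ≫ g) (c : g ≫ f ⟶ 𝟙 P') (u' : 𝟙 Q ⟶ f' ≫ g')
    (ψ : f ≫ x' ⟶ x ≫ f') (ψi : x ≫ f' ⟶ f ≫ x')
    (hψ : ψi ≫ ψ = 𝟙 _)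
    (T1 : leftZigzag u c = (λ_ f).hom ≫ (ρ_ f).inv) :
    𝟙 x ⊗≫ u ▷ x ⊗≫ f ◁ mateAux g x x' f' g' f u' c ψi ⊗≫ ψ ▷ g'
      = 𝟙 x ⊗≫ x ◁ u' ⊗≫ 𝟙 ((x ≫ f') ≫ g') := by
  calc 𝟙 x ⊗≫ u ▷ x ⊗≫ f ◁ mateAux g x x' f' g' f u' c ψi ⊗≫ ψ ▷ g'
      = (𝟙 x ⊗≫ u ▷ x ⊗≫ f ◁ mateAux g x x' f' g' f u' c ψi) ⊗≫ ψ ▷ g' ⊗≫ 𝟙 _ := by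
        bicategory
    _ = (𝟙 x ⊗≫ x ◁ u' ⊗≫ ψi ▷ g' ⊗≫ 𝟙 (f ≫ x' ≫ g')) ⊗≫ ψ ▷ g' ⊗≫ 𝟙 _ := by
        rw [jlem g x x' f' g' f u c u' ψi T1]
    _ = 𝟙 x ⊗≫ x ◁ u' ⊗≫ (ψi ≫ ψ) ▷ g' ⊗≫ 𝟙 _ := by bicategory
    _ = 𝟙 x ⊗≫ x ◁ u' ⊗≫ 𝟙 ((x ≫ f') ≫ g') := by rw [hψ]; bicategory

theorem mwlem (g : P' ⟶ P) (x : P ⟶ Q) (x' : P' ⟶ Q') (f' : Q ⟶ Q') (g' : Q' ⟶ Q)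
    (f : P ⟶ P') (u' : 𝟙 Q ⟶ f' ≫ g') (c : g ≫ f ⟶ 𝟙 P') (c' : g' ≫ f' ⟶ 𝟙 Q')
    (ψ : f ≫ x' ⟶ x ≫ f') (ψi : x ≫ f' ⟶ f ≫ x')
    (hψ : ψ ≫ ψi = 𝟙 _)
    (T1' : leftZigzag u' c' = (λ_ f').hom ≫ (ρ_ f').inv) :
    𝟙 ((g ≫ f) ≫ x') ⊗≫ g ◁ ψ ⊗≫ mateAux g x x' f' g' f u' c ψi ▷ f' ⊗≫ x' ◁ c'
      = c ▷ x' ⊗≫ 𝟙 (x' ≫ 𝟙 Q') := by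
  dsimp only [mateAux]
  calc 𝟙 ((g ≫ f) ≫ x') ⊗≫ g ◁ ψ
        ⊗≫ (𝟙 _ ⊗≫ (g ≫ x) ◁ u' ⊗≫ g ◁ ψi ▷ g' ⊗≫ c ▷ (x' ≫ g') ⊗≫ 𝟙 _) ▷ f' ⊗≫ x' ◁ c'
      = 𝟙 _ ⊗≫ g ◁ ψ ⊗≫ (g ≫ x) ◁ u' ▷ f' ⊗≫ g ◁ ψi ▷ (g' ≫ f')
          ⊗≫ ((g ≫ f) ◁ (x' ◁ c') ≫ c ▷ (x' ≫ 𝟙 Q')) ⊗≫ 𝟙 _ := by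
        rw [whisker_exchange c (x' ◁ c')]; bicategory
    _ = 𝟙 _ ⊗≫ g ◁ ψ ⊗≫ (g ≫ x) ◁ u' ▷ f'
          ⊗≫ g ◁ ((x ≫ f') ◁ c' ≫ ψi ▷ 𝟙 Q') ⊗≫ c ▷ x' ⊗≫ 𝟙 _ := by
        rw [whisker_exchange ψi c']; bicategory
    _ = 𝟙 _ ⊗≫ g ◁ ψ ⊗≫ g ◁ x ◁ (leftZigzag u' c') ⊗≫ g ◁ ψi ▷ 𝟙 Q'
          ⊗≫ c ▷ x' ⊗≫ 𝟙 _ := by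
        dsimp only [leftZigzag, bicategoricalComp]; bicategory
    _ = 𝟙 _ ⊗≫ g ◁ (ψ ≫ ψi) ⊗≫ c ▷ x' ⊗≫ 𝟙 _ := by rw [T1']; bicategory
    _ = c ▷ x' ⊗≫ 𝟙 (x' ≫ 𝟙 Q') := by rw [hψ]; bicategory

theorem eunitlem (g : P' ⟶ P) (x : P ⟶ P) (x' : P' ⟶ P') (f : P ⟶ P')
    (u : 𝟙 P ⟶ f ≫ g) (c : g ≫ f ⟶ 𝟙 P')
    (η : x ⟶ 𝟙 P) (η' : x' ⟶ 𝟙 P')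
    (ψi : x ≫ f ⟶ f ≫ x')
    (hax : ψi ≫ f ◁ η' = η ▷ f ⊗≫ 𝟙 (f ≫ 𝟙 P'))
    (T2 : rightZigzag u c = (ρ_ g).hom ≫ (λ_ g).inv) :
    mateAux g x x' f g f u c ψi ⊗≫ η' ▷ g = g ◁ η ⊗≫ 𝟙 (𝟙 P' ≫ g) := by
  calc mateAux g x x' f g f u c ψi ⊗≫ η' ▷ g
      = 𝟙 _ ⊗≫ (g ≫ x) ◁ u ⊗≫ g ◁ ψi ▷ g
          ⊗≫ (c ▷ (x' ≫ g) ≫ 𝟙 P' ◁ (η' ▷ g)) ⊗≫ 𝟙 _ := by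
        dsimp only [mateAux]; bicategory
    _ = 𝟙 _ ⊗≫ (g ≫ x) ◁ u ⊗≫ g ◁ ψi ▷ g
          ⊗≫ ((g ≫ f) ◁ (η' ▷ g) ≫ c ▷ (𝟙 P' ≫ g)) ⊗≫ 𝟙 _ := by
        rw [whisker_exchange c (η' ▷ g)]
    _ = 𝟙 _ ⊗≫ (g ≫ x) ◁ u ⊗≫ g ◁ ((ψi ≫ f ◁ η') ▷ g) ⊗≫ c ▷ (𝟙 P' ≫ g) ⊗≫ 𝟙 _ := by
        bicategory
    _ = 𝟙 _ ⊗≫ g ◁ (x ◁ u ≫ η ▷ (f ≫ g)) ⊗≫ c ▷ (𝟙 P' ≫ g) ⊗≫ 𝟙 _ := by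
        rw [hax]; bicategory
    _ = 𝟙 _ ⊗≫ g ◁ (η ▷ 𝟙 P ≫ 𝟙 P ◁ u) ⊗≫ c ▷ (𝟙 P' ≫ g) ⊗≫ 𝟙 _ := by
        rw [whisker_exchange η u]
    _ = g ◁ η ⊗≫ rightZigzag u c ⊗≫ 𝟙 _ := by
        dsimp only [rightZigzag, bicategoricalComp]; bicategory
    _ = g ◁ η ⊗≫ 𝟙 (𝟙 P' ≫ g) := by rw [T2]; bicategory

end

section
variable {P Q R P' Q' R' : B}

theorem ethetalem
    (f₁ : P ⟶ P') (g₁ : P' ⟶ P) (c₁ : g₁ ≫ f₁ ⟶ 𝟙 P')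
    (f₂ : Q ⟶ Q') (g₂ : Q' ⟶ Q) (u₂ : 𝟙 Q ⟶ f₂ ≫ g₂) (c₂ : g₂ ≫ f₂ ⟶ 𝟙 Q')
    (f₃ : R ⟶ R') (g₃ : R' ⟶ R) (u₃ : 𝟙 R ⟶ f₃ ≫ g₃)
    (xa : P ⟶ Q) (xb : Q ⟶ R) (xm : P ⟶ R)
    (xa' : P' ⟶ Q') (xb' : Q' ⟶ R') (xm' : P' ⟶ R')
    (θ : xm ⟶ xa ≫ xb) (θ' : xm' ⟶ xa' ≫ xb')
    (ψai : xa ≫ f₂ ⟶ f₁ ≫ xa') (ψbi : xb ≫ f₃ ⟶ f₂ ≫ xb') (ψmi : xm ≫ f₃ ⟶ f₁ ≫ xm')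
    (hax : ψmi ≫ f₁ ◁ θ' = θ ▷ f₃ ⊗≫ xa ◁ ψbi ⊗≫ ψai ▷ xb' ⊗≫ 𝟙 (f₁ ≫ xa' ≫ xb'))
    (T1₂ : leftZigzag u₂ c₂ = (λ_ f₂).hom ≫ (ρ_ f₂).inv) :
    𝟙 (g₁ ≫ xm) ⊗≫ g₁ ◁ θ ⊗≫ mateAux g₁ xa xa' f₂ g₂ f₁ u₂ c₁ ψai ▷ xb
        ⊗≫ xa' ◁ mateAux g₂ xb xb' f₃ g₃ f₂ u₃ c₂ ψbi
      = mateAux g₁ xm xm' f₃ g₃ f₁ u₃ c₁ ψmi ⊗≫ θ' ▷ g₃ ⊗≫ 𝟙 (xa' ≫ xb' ≫ g₃) := by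
  set mb := mateAux g₂ xb xb' f₃ g₃ f₂ u₃ c₂ ψbi with hmb
  calc 𝟙 (g₁ ≫ xm) ⊗≫ g₁ ◁ θ ⊗≫ mateAux g₁ xa xa' f₂ g₂ f₁ u₂ c₁ ψai ▷ xb ⊗≫ xa' ◁ mb
      = 𝟙 _ ⊗≫ g₁ ◁ θ ⊗≫ (g₁ ≫ xa) ◁ u₂ ▷ xb ⊗≫ g₁ ◁ ψai ▷ (g₂ ≫ xb)
          ⊗≫ (c₁ ▷ (xa' ≫ g₂ ≫ xb) ≫ 𝟙 P' ◁ (xa' ◁ mb)) ⊗≫ 𝟙 _ := by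
        dsimp only [mateAux]; bicategory
    _ = 𝟙 _ ⊗≫ g₁ ◁ θ ⊗≫ (g₁ ≫ xa) ◁ u₂ ▷ xb ⊗≫ g₁ ◁ ψai ▷ (g₂ ≫ xb)
          ⊗≫ ((g₁ ≫ f₁) ◁ (xa' ◁ mb) ≫ c₁ ▷ (xa' ≫ xb' ≫ g₃)) ⊗≫ 𝟙 _ := by
        rw [whisker_exchange c₁ (xa' ◁ mb)]
    _ = 𝟙 _ ⊗≫ g₁ ◁ θ ⊗≫ (g₁ ≫ xa) ◁ u₂ ▷ xb
          ⊗≫ g₁ ◁ ((xa ≫ f₂) ◁ mb ≫ ψai ▷ (xb' ≫ g₃))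
          ⊗≫ c₁ ▷ (xa' ≫ xb' ≫ g₃) ⊗≫ 𝟙 _ := by
        rw [whisker_exchange ψai mb]; bicategory
    _ = 𝟙 _ ⊗≫ g₁ ◁ θ ⊗≫ (g₁ ≫ xa) ◁ (𝟙 xb ⊗≫ u₂ ▷ xb ⊗≫ f₂ ◁ mb)
          ⊗≫ g₁ ◁ ψai ▷ (xb' ≫ g₃) ⊗≫ c₁ ▷ (xa' ≫ xb' ≫ g₃) ⊗≫ 𝟙 _ := by
        bicategory
    _ = 𝟙 _ ⊗≫ g₁ ◁ θ ⊗≫ (g₁ ≫ xa) ◁ (𝟙 xb ⊗≫ xb ◁ u₃ ⊗≫ ψbi ▷ g₃ ⊗≫ 𝟙 (f₂ ≫ xb' ≫ g₃))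
          ⊗≫ g₁ ◁ ψai ▷ (xb' ≫ g₃) ⊗≫ c₁ ▷ (xa' ≫ xb' ≫ g₃) ⊗≫ 𝟙 _ := by
        rw [hmb, jlem g₂ xb xb' f₃ g₃ f₂ u₂ c₂ u₃ ψbi T1₂]
    _ = 𝟙 _ ⊗≫ g₁ ◁ ((xm ◁ u₃ ≫ θ ▷ (f₃ ≫ g₃)) ⊗≫ xa ◁ ψbi ▷ g₃ ⊗≫ ψai ▷ (xb' ≫ g₃))
          ⊗≫ c₁ ▷ (xa' ≫ xb' ≫ g₃) ⊗≫ 𝟙 _ := by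
        rw [whisker_exchange θ u₃]; bicategory
    _ = 𝟙 _ ⊗≫ (g₁ ≫ xm) ◁ u₃
          ⊗≫ g₁ ◁ ((θ ▷ f₃ ⊗≫ xa ◁ ψbi ⊗≫ ψai ▷ xb' ⊗≫ 𝟙 (f₁ ≫ xa' ≫ xb')) ▷ g₃)
          ⊗≫ c₁ ▷ (xa' ≫ xb' ≫ g₃) ⊗≫ 𝟙 _ := by
        bicategory
    _ = 𝟙 _ ⊗≫ (g₁ ≫ xm) ◁ u₃ ⊗≫ g₁ ◁ ((ψmi ≫ f₁ ◁ θ') ▷ g₃)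
          ⊗≫ c₁ ▷ (xa' ≫ xb' ≫ g₃) ⊗≫ 𝟙 _ := by rw [hax]
    _ = 𝟙 _ ⊗≫ (g₁ ≫ xm) ◁ u₃ ⊗≫ g₁ ◁ ψmi ▷ g₃
          ⊗≫ ((g₁ ≫ f₁) ◁ (θ' ▷ g₃) ≫ c₁ ▷ ((xa' ≫ xb') ≫ g₃)) ⊗≫ 𝟙 _ := by
        bicategory
    _ = 𝟙 _ ⊗≫ (g₁ ≫ xm) ◁ u₃ ⊗≫ g₁ ◁ ψmi ▷ g₃
          ⊗≫ (c₁ ▷ (xm' ≫ g₃) ≫ 𝟙 P' ◁ (θ' ▷ g₃)) ⊗≫ 𝟙 _ := by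
        rw [← whisker_exchange c₁ (θ' ▷ g₃)]
    _ = mateAux g₁ xm xm' f₃ g₃ f₁ u₃ c₁ ψmi ⊗≫ θ' ▷ g₃ ⊗≫ 𝟙 (xa' ≫ xb' ≫ g₃) := by
        dsimp only [mateAux]; bicategory

end


section
variable {a b c : B}

theorem sec_whisker_transfer {p q : a ⟶ b} (ψ : p ⟶ q) (e : b ⟶ c) (e' : c ⟶ b)
    (w : 𝟙 b ⟶ e ≫ e') [IsIso w] (σ : q ≫ e ⟶ p ≫ e) (hσ : σ ≫ ψ ▷ e = 𝟙 (q ≫ e)) :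
    ∃ σ' : q ⟶ p, σ' ≫ ψ = 𝟙 q := by
  refine ⟨𝟙 q ⊗≫ q ◁ w ⊗≫ σ ▷ e' ⊗≫ p ◁ inv w ⊗≫ 𝟙 p, ?_⟩
  calc (𝟙 q ⊗≫ q ◁ w ⊗≫ σ ▷ e' ⊗≫ p ◁ inv w ⊗≫ 𝟙 p) ≫ ψ
      = 𝟙 q ⊗≫ q ◁ w ⊗≫ σ ▷ e' ⊗≫ (p ◁ inv w ≫ ψ ▷ 𝟙 b) ⊗≫ 𝟙 q := by bicategory
    _ = 𝟙 q ⊗≫ q ◁ w ⊗≫ (σ ▷ e' ≫ (ψ ▷ e) ▷ e') ⊗≫ q ◁ inv w ⊗≫ 𝟙 q := by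
        rw [whisker_exchange ψ (inv w)]; bicategory
    _ = 𝟙 q ⊗≫ q ◁ w ⊗≫ (σ ≫ ψ ▷ e) ▷ e' ⊗≫ q ◁ inv w ⊗≫ 𝟙 q := by
        bicategory
    _ = 𝟙 q ⊗≫ q ◁ (w ≫ inv w) ⊗≫ 𝟙 q := by rw [hσ]; bicategory
    _ = 𝟙 q := by rw [IsIso.hom_inv_id]; bicategory

theorem ret_whisker_transfer {p q : c ⟶ b} (ψ : p ⟶ q) (d : a ⟶ c) (f : c ⟶ a)
    (zz : 𝟙 c ⟶ f ≫ d) [IsIso zz] (τ : d ≫ q ⟶ d ≫ p) (hτ : (d ◁ ψ) ≫ τ = 𝟙 (d ≫ p)) :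
    ∃ τ' : q ⟶ p, ψ ≫ τ' = 𝟙 p := by
  refine ⟨𝟙 q ⊗≫ zz ▷ q ⊗≫ f ◁ τ ⊗≫ inv zz ▷ p ⊗≫ 𝟙 p, ?_⟩
  calc ψ ≫ (𝟙 q ⊗≫ zz ▷ q ⊗≫ f ◁ τ ⊗≫ inv zz ▷ p ⊗≫ 𝟙 p)
      = 𝟙 p ⊗≫ (𝟙 c ◁ ψ ≫ zz ▷ q) ⊗≫ f ◁ τ ⊗≫ inv zz ▷ p ⊗≫ 𝟙 p := by bicategory
    _ = 𝟙 p ⊗≫ zz ▷ p ⊗≫ (f ◁ (d ◁ ψ) ≫ f ◁ τ) ⊗≫ inv zz ▷ p ⊗≫ 𝟙 p := by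
        rw [whisker_exchange zz ψ]; bicategory
    _ = 𝟙 p ⊗≫ (zz ≫ inv zz) ▷ p ⊗≫ 𝟙 p := by
        rw [← Bicategory.whiskerLeft_comp, hτ]; bicategory
    _ = 𝟙 p := by rw [IsIso.hom_inv_id]; bicategory

end

end GeneralBicat

section ForwardAux

theorem sec_extract {𝒞 : Type*} [Category 𝒞] {X Y Z W : 𝒞} (P : X ⟶ Y) (B : Y ⟶ Z)
    (e : Z ⟶ W) [IsIso e] (h : IsIso (P ≫ B ≫ e)) : ∃ σ, σ ≫ B = 𝟙 Z :=
  ⟨e ≫ inv (P ≫ B ≫ e) ≫ P, by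
    have hPB : P ≫ B = (P ≫ B ≫ e) ≫ inv e := by simp
    simp only [Category.assoc]
    rw [hPB, IsIso.inv_hom_id_assoc, IsIso.hom_inv_id]⟩

theorem ret_extract {𝒞 : Type*} [Category 𝒞] {X Y Z W : 𝒞} (e : X ⟶ Y) (A : Y ⟶ Z)
    (Q : Z ⟶ W) [IsIso e] (h : IsIso (e ≫ A ≫ Q)) : ∃ τ, A ≫ τ = 𝟙 Y :=
  ⟨Q ≫ inv (e ≫ A ≫ Q) ≫ e, by
    have key : (A ≫ Q) ≫ inv (e ≫ A ≫ Q) ≫ e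
        = (inv e ≫ (e ≫ A ≫ Q)) ≫ inv (e ≫ A ≫ Q) ≫ e := by
      congr 1
      simp
    rw [← Category.assoc A Q, key]
    simp only [Category.assoc, IsIso.hom_inv_id_assoc, IsIso.inv_hom_id]⟩

theorem isIso_of_sec_ret {𝒞 : Type*} [Category 𝒞] {X Y : 𝒞} (f : X ⟶ Y) (σ τ : Y ⟶ X)
    (h1 : σ ≫ f = 𝟙 Y) (h2 : f ≫ τ = 𝟙 X) : IsIso f := by
  have : σ = τ := by
    calc σ = σ ≫ (f ≫ τ) := by rw [h2, Category.comp_id]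
      _ = (σ ≫ f) ≫ τ := by rw [Category.assoc]
      _ = τ := by rw [h1, Category.id_comp]
  exact ⟨τ, ⟨h2, by rw [← this, h1]⟩⟩

end ForwardAux

/-- A left transformation `(F, ψ) : X → X'` between oplax functors
is an equivalence in `Oplax(I, C)` if and only if every `F(i)` is an equivalence
in `C` and every `ψ(a)` is invertible. -/
theorem ltdata_isEquivalence_iff {X X' : OplaxData I C} (hX : X.IsOplax) (hX' : X'.IsOplax)
    (F : LTData X X') (hF : F.IsLT) :
    F.IsEquivalenceInOplax ↔
      (∀ i : I, IsEquivalence1Cell (F.app i)) ∧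
      (∀ {i j : I} (a : i ⟶ j), IsIso (F.psi a)) := by
  constructor
  · -- forward direction
    rintro ⟨hFlt, E, hE, ⟨z, hz, hziso⟩, ⟨w, hw, hwiso⟩⟩
    constructor
    · intro i
      haveI := hziso i; haveI := hwiso i
      exact ⟨E.app i, ⟨@inv _ _ _ _ (z i) (hziso i), @IsIso.inv_isIso _ _ _ _ (z i) (hziso i)⟩,
        ⟨@inv _ _ _ _ (w i) (hwiso i), @IsIso.inv_isIso _ _ _ _ (w i) (hwiso i)⟩⟩
    · intro i j a
      haveI := hziso i; haveI := hziso j; haveI := hwiso i; haveI := hwiso j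
      have hz' := hz a
      have hw' := hw a
      dsimp only [LTData.comp, LTData.id, IsModification] at hz' hw'
      -- a two-sided section for `F.psi a ▷ E.app j`
      have hBiso : IsIso ((z i ▷ X.map a) ≫ eqToHom (Category.assoc _ _ _) ≫
          (F.app i ◁ E.psi a) ≫ eqToHom (Category.assoc _ _ _).symm ≫
          ((F.psi a ▷ E.app j) ≫ eqToHom (Category.assoc _ _ _))) := by
        rw [show (z i ▷ X.map a) ≫ eqToHom (Category.assoc _ _ _) ≫
          (F.app i ◁ E.psi a) ≫ eqToHom (Category.assoc _ _ _).symm ≫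
          ((F.psi a ▷ E.app j) ≫ eqToHom (Category.assoc _ _ _)) = _ from hz']
        exact @IsIso.comp_isIso _ _ _ _ _ _ _ (Iso.isIso_hom (eqToIso (by simp [LTData.id])))
          (Iso.isIso_hom (Bicategory.whiskerLeftIso (X.map a) (@asIso _ _ _ _ (z j) (hziso j))))
      obtain ⟨σ, hσ⟩ := sec_extract
        ((z i ▷ X.map a) ≫ eqToHom (Category.assoc _ _ _) ≫
          (F.app i ◁ E.psi a) ≫ eqToHom (Category.assoc _ _ _).symm)
        (F.psi a ▷ E.app j) (eqToHom (Category.assoc _ _ _))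
        (by simpa only [Category.assoc] using hBiso)
      have hAiso : IsIso ((w i ▷ X'.map a) ≫ eqToHom (Category.assoc _ _ _) ≫
          (E.app i ◁ F.psi a) ≫ eqToHom (Category.assoc _ _ _).symm ≫
          (E.psi a ▷ F.app j) ≫ eqToHom (Category.assoc _ _ _)) := by
        rw [show (w i ▷ X'.map a) ≫ eqToHom (Category.assoc _ _ _) ≫
          (E.app i ◁ F.psi a) ≫ eqToHom (Category.assoc _ _ _).symm ≫
          (E.psi a ▷ F.app j) ≫ eqToHom (Category.assoc _ _ _) = _ from hw']
        exact @IsIso.comp_isIso _ _ _ _ _ _ _ (Iso.isIso_hom (eqToIso (by simp [LTData.id])))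
          (Iso.isIso_hom (Bicategory.whiskerLeftIso (X'.map a) (@asIso _ _ _ _ (w j) (hwiso j))))
      obtain ⟨τ, hτ⟩ := @ret_extract _ _ _ _ _ _
        ((w i ▷ X'.map a) ≫ eqToHom (Category.assoc _ _ _))
        (E.app i ◁ F.psi a)
        (eqToHom (Category.assoc _ _ _).symm ≫ (E.psi a ▷ F.app j) ≫
          eqToHom (Category.assoc _ _ _))
        (@IsIso.comp_isIso _ _ _ _ _ _ _
          (Iso.isIso_hom (Bicategory.whiskerRightIso (@asIso _ _ _ _ (w i) (hwiso i)) (X'.map a)))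
          (Iso.isIso_hom (eqToIso (by simp [LTData.comp]))))
        (by simpa only [Category.assoc] using hAiso)
      obtain ⟨σ', hσ'⟩ := @sec_whisker_transfer _ _ _ _ _ _ _ (F.psi a) (E.app j) (F.app j) (w j) (hwiso j) σ hσ
      obtain ⟨τ', hτ'⟩ := @ret_whisker_transfer _ _ _ _ _ _ _ (F.psi a) (E.app i) (F.app i) (z i) (hziso i) τ hτ
      exact isIso_of_sec_ret (F.psi a) σ' τ' hσ' hτ'
  · -- backward direction
    rintro ⟨h1, h2⟩
    have hch : ∀ i, ∃ (g : X'.obj i ⟶ X.obj i) (u : 𝟙 (X.obj i) ⟶ F.app i ≫ g)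
        (c : g ≫ F.app i ⟶ 𝟙 (X'.obj i)), IsIso u ∧ IsIso c ∧
        (leftZigzag u c = (λ_ (F.app i)).hom ≫ (ρ_ (F.app i)).inv) ∧
        (rightZigzag u c = (ρ_ g).hom ≫ (λ_ g).inv) := by
      intro i
      obtain ⟨g, ⟨α, hα⟩, ⟨β, hβ⟩⟩ := h1 i
      haveI := hα; haveI := hβ
      let e := Bicategory.Equivalence.mkOfAdjointifyCounit (f := F.app i) (g := g)
        (asIso α).symm (asIso β)
      exact ⟨g, e.unit.hom, e.counit.hom, Iso.isIso_hom e.unit, Iso.isIso_hom e.counit,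
        e.left_triangle_hom, e.right_triangle_hom⟩
    choose g u c hu hc T1 T2 using hch
    haveI : ∀ i, IsIso (u i) := hu
    haveI : ∀ i, IsIso (c i) := hc
    refine ⟨hF, ⟨g, fun {i j} a => mateAux (g i) (X.map a) (X'.map a) (F.app j) (g j)
      (F.app i) (u j) (c i) (inv (F.psi a))⟩, ⟨?_, ?_⟩, ⟨u, ?_, hu⟩,
      ⟨fun i => @inv _ _ _ _ (c i) (hc i), ?_, fun i => @IsIso.inv_isIso _ _ _ _ (c i) (hc i)⟩⟩
    · -- unit axiom for E
      intro i
      haveI := h2 (𝟙 i)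
      have hax : inv (F.psi (𝟙 i)) ≫ (F.app i ◁ X'.eta i)
          = X.eta i ▷ F.app i ⊗≫ 𝟙 (F.app i ≫ 𝟙 (X'.obj i)) := by
        rw [IsIso.inv_comp_eq]
        simp only [bicategoricalComp, BicategoricalCoherence.iso,
        Bicategory.Strict.associator_eqToIso, Bicategory.Strict.leftUnitor_eqToIso,
        Bicategory.Strict.rightUnitor_eqToIso, eqToIso.hom, eqToIso.inv, Iso.trans_hom,
        Iso.symm_hom, Iso.refl_hom, Iso.trans_inv, Iso.symm_inv, Iso.refl_inv,
        whiskerRightIso_hom, whiskerRightIso_inv, whiskerLeftIso_hom, whiskerLeftIso_inv,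
        Bicategory.whiskerLeft_eqToHom, Bicategory.eqToHom_whiskerRight, eqToHom_trans,
        eqToHom_refl, Category.assoc, Category.id_comp, Category.comp_id,
        Bicategory.whiskerLeft_id, Bicategory.id_whiskerRight, Bicategory.whiskerLeft_comp,
        Bicategory.comp_whiskerRight, Bicategory.comp_whiskerLeft, Bicategory.whiskerRight_comp,
        Bicategory.whisker_assoc, Bicategory.id_whiskerLeft, Bicategory.whiskerRight_id,
        eqToHom_trans_assoc, LTData.comp, LTData.id]
        rw [← Category.assoc, hF.1 i]
        simp
      have key := eunitlem (g i) (X.map (𝟙 i)) (X'.map (𝟙 i)) (F.app i) (u i) (c i)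
        (X.eta i) (X'.eta i) (inv (F.psi (𝟙 i))) hax (T2 i)
      simp only [bicategoricalComp, BicategoricalCoherence.iso,
        Bicategory.Strict.associator_eqToIso, Bicategory.Strict.leftUnitor_eqToIso,
        Bicategory.Strict.rightUnitor_eqToIso, eqToIso.hom, eqToIso.inv, Iso.trans_hom,
        Iso.symm_hom, Iso.refl_hom, Iso.trans_inv, Iso.symm_inv, Iso.refl_inv,
        whiskerRightIso_hom, whiskerRightIso_inv, whiskerLeftIso_hom, whiskerLeftIso_inv,
        Bicategory.whiskerLeft_eqToHom, Bicategory.eqToHom_whiskerRight, eqToHom_trans,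
        eqToHom_refl, Category.assoc, Category.id_comp, Category.comp_id,
        Bicategory.whiskerLeft_id, Bicategory.id_whiskerRight, Bicategory.whiskerLeft_comp,
        Bicategory.comp_whiskerRight, Bicategory.comp_whiskerLeft, Bicategory.whiskerRight_comp,
        Bicategory.whisker_assoc, Bicategory.id_whiskerLeft, Bicategory.whiskerRight_id,
        eqToHom_trans_assoc, LTData.comp, LTData.id] at key ⊢
      exact key
    · -- theta axiom for E
      intro i j k a b
      haveI := h2 a; haveI := h2 b; haveI := h2 (a ≫ b)
      have hax : inv (F.psi (a ≫ b)) ≫ (F.app i ◁ X'.theta a b)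
          = X.theta a b ▷ F.app k ⊗≫ X.map a ◁ inv (F.psi b)
              ⊗≫ inv (F.psi a) ▷ X'.map b ⊗≫ 𝟙 (F.app i ≫ X'.map a ≫ X'.map b) := by
        rw [IsIso.inv_comp_eq]
        simp only [bicategoricalComp, BicategoricalCoherence.iso,
        Bicategory.Strict.associator_eqToIso, Bicategory.Strict.leftUnitor_eqToIso,
        Bicategory.Strict.rightUnitor_eqToIso, eqToIso.hom, eqToIso.inv, Iso.trans_hom,
        Iso.symm_hom, Iso.refl_hom, Iso.trans_inv, Iso.symm_inv, Iso.refl_inv,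
        whiskerRightIso_hom, whiskerRightIso_inv, whiskerLeftIso_hom, whiskerLeftIso_inv,
        Bicategory.whiskerLeft_eqToHom, Bicategory.eqToHom_whiskerRight, eqToHom_trans,
        eqToHom_refl, Category.assoc, Category.id_comp, Category.comp_id,
        Bicategory.whiskerLeft_id, Bicategory.id_whiskerRight, Bicategory.whiskerLeft_comp,
        Bicategory.comp_whiskerRight, Bicategory.comp_whiskerLeft, Bicategory.whiskerRight_comp,
        Bicategory.whisker_assoc, Bicategory.id_whiskerLeft, Bicategory.whiskerRight_id,
        eqToHom_trans_assoc, LTData.comp, LTData.id]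
        have e0 : F.psi (a ≫ b) ≫ X.theta a b ▷ F.app k
            = ((F.app i ◁ X'.theta a b) ≫ eqToHom (Category.assoc _ _ _).symm ≫
                (F.psi a ▷ X'.map b) ≫ eqToHom (Category.assoc _ _ _) ≫
                (X.map a ◁ F.psi b)) ≫ eqToHom (Category.assoc _ _ _).symm := by
          rw [hF.2 a b]
          simp
        rw [reassoc_of% e0]
        simp only [Category.assoc, eqToHom_trans, eqToHom_trans_assoc, eqToHom_refl,
          Category.comp_id, Category.id_comp, ← Bicategory.whiskerLeft_comp,
          ← Bicategory.whiskerLeft_comp_assoc, ← Bicategory.comp_whiskerRight,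
          ← Bicategory.comp_whiskerRight_assoc, IsIso.hom_inv_id, IsIso.inv_hom_id,
          Bicategory.whiskerLeft_id, Bicategory.id_whiskerRight]
      have key := ethetalem (F.app i) (g i) (c i) (F.app j) (g j) (u j) (c j)
        (F.app k) (g k) (u k) (X.map a) (X.map b) (X.map (a ≫ b))
        (X'.map a) (X'.map b) (X'.map (a ≫ b)) (X.theta a b) (X'.theta a b)
        (inv (F.psi a)) (inv (F.psi b)) (inv (F.psi (a ≫ b))) hax (T1 j)
      simp only [bicategoricalComp, BicategoricalCoherence.iso,
        Bicategory.Strict.associator_eqToIso, Bicategory.Strict.leftUnitor_eqToIso,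
        Bicategory.Strict.rightUnitor_eqToIso, eqToIso.hom, eqToIso.inv, Iso.trans_hom,
        Iso.symm_hom, Iso.refl_hom, Iso.trans_inv, Iso.symm_inv, Iso.refl_inv,
        whiskerRightIso_hom, whiskerRightIso_inv, whiskerLeftIso_hom, whiskerLeftIso_inv,
        Bicategory.whiskerLeft_eqToHom, Bicategory.eqToHom_whiskerRight, eqToHom_trans,
        eqToHom_refl, Category.assoc, Category.id_comp, Category.comp_id,
        Bicategory.whiskerLeft_id, Bicategory.id_whiskerRight, Bicategory.whiskerLeft_comp,
        Bicategory.comp_whiskerRight, Bicategory.comp_whiskerLeft, Bicategory.whiskerRight_comp,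
        Bicategory.whisker_assoc, Bicategory.id_whiskerLeft, Bicategory.whiskerRight_id,
        eqToHom_trans_assoc, LTData.comp, LTData.id] at key ⊢
      exact key
    · -- u is a modification
      intro i j a
      haveI := h2 a
      have key := mzlem (g i) (X.map a) (X'.map a) (F.app j) (g j) (F.app i) (u i) (c i)
        (u j) (F.psi a) (inv (F.psi a)) (IsIso.inv_hom_id _) (T1 i)
      dsimp only [LTData.comp, LTData.id]
      simp only [bicategoricalComp, BicategoricalCoherence.iso,
        Bicategory.Strict.associator_eqToIso, Bicategory.Strict.leftUnitor_eqToIso,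
        Bicategory.Strict.rightUnitor_eqToIso, eqToIso.hom, eqToIso.inv, Iso.trans_hom,
        Iso.symm_hom, Iso.refl_hom, Iso.trans_inv, Iso.symm_inv, Iso.refl_inv,
        whiskerRightIso_hom, whiskerRightIso_inv, whiskerLeftIso_hom, whiskerLeftIso_inv,
        Bicategory.whiskerLeft_eqToHom, Bicategory.eqToHom_whiskerRight, eqToHom_trans,
        eqToHom_refl, Category.assoc, Category.id_comp, Category.comp_id,
        Bicategory.whiskerLeft_id, Bicategory.id_whiskerRight, Bicategory.whiskerLeft_comp,
        Bicategory.comp_whiskerRight, Bicategory.comp_whiskerLeft, Bicategory.whiskerRight_comp,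
        Bicategory.whisker_assoc, Bicategory.id_whiskerLeft, Bicategory.whiskerRight_id,
        eqToHom_trans_assoc, LTData.comp, LTData.id] at key ⊢
      rw [← cancel_epi (eqToHom (Category.id_comp (X.map a)).symm),
        ← cancel_mono (eqToHom (Category.assoc (X.map a) (F.app j) (g j)).symm)]
      simp only [Category.assoc, eqToHom_trans, eqToHom_trans_assoc, eqToHom_refl,
        Category.comp_id, Category.id_comp] at key ⊢
      exact key
    · -- inv c is a modification
      intro i j a
      haveI := h2 a
      have key := mwlem (g i) (X.map a) (X'.map a) (F.app j) (g j) (F.app i) (u j) (c i)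
        (c j) (F.psi a) (inv (F.psi a)) (IsIso.hom_inv_id _) (T1 j)
      dsimp only [LTData.comp, LTData.id]
      rw [← cancel_epi (c i ▷ X'.map a), ← cancel_mono (X'.map a ◁ c j)]
      simp only [Category.assoc, ← Bicategory.comp_whiskerRight_assoc,
        ← Bicategory.whiskerLeft_comp, IsIso.hom_inv_id, IsIso.inv_hom_id,
        Bicategory.id_whiskerRight, Bicategory.whiskerLeft_id,
        Category.id_comp, Category.comp_id]
      simp only [bicategoricalComp, BicategoricalCoherence.iso,
        Bicategory.Strict.associator_eqToIso, Bicategory.Strict.leftUnitor_eqToIso,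
        Bicategory.Strict.rightUnitor_eqToIso, eqToIso.hom, eqToIso.inv, Iso.trans_hom,
        Iso.symm_hom, Iso.refl_hom, Iso.trans_inv, Iso.symm_inv, Iso.refl_inv,
        whiskerRightIso_hom, whiskerRightIso_inv, whiskerLeftIso_hom, whiskerLeftIso_inv,
        Bicategory.whiskerLeft_eqToHom, Bicategory.eqToHom_whiskerRight, eqToHom_trans,
        eqToHom_refl, Category.assoc, Category.id_comp, Category.comp_id,
        Bicategory.whiskerLeft_id, Bicategory.id_whiskerRight, Bicategory.whiskerLeft_comp,
        Bicategory.comp_whiskerRight, Bicategory.comp_whiskerLeft, Bicategory.whiskerRight_comp,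
        Bicategory.whisker_assoc, Bicategory.id_whiskerLeft, Bicategory.whiskerRight_id,
        eqToHom_trans_assoc, LTData.comp, LTData.id] at key ⊢
      exact key
end

section
/- Let k be a commutative ring and X = (X, η, θ) : I → Cat an oplax functor from a small category I to the 2-category of small categories. Then the following data define a lax functor Mod'X = (Mod'X, Mod'η, Mod'θ) from Iᵒᵖ to the 2-category of categories: (Mod'X)(i) := Mod X(i); for each a : i → j in I, (Mod'X)(a) := (−)∘X(a) : Mod X(j) → Mod X(i) is restriction along X(a) (sending f : M → N to f∘X(a) : M∘X(a) → N∘X(a)); for each object i, (Mod'η)_i : id_{Mod X(i)} ⇒ (Mod'X)(id_i) is given on M ∈ Mod X(i) by ((Mod'η)_i M)(x) := M(η_i x) : M(x) → M(X(id_i)x) for objects x of X(i); and for each composable pair a : i → j, b : j → k in I, (Mod'θ)_{b,a} : (Mod'X)(a)∘(Mod'X)(b) ⇒ (Mod'X)(ba) is given on M ∈ Mod X(k) by ((Mod'θ)_{b,a} M)(x) := M(θ_{b,a}(x)) : M(X(b)(X(a)x)) → M(X(ba)x). In particular, each (Mod'η)_i M and (Mod'θ)_{b,a} M is a morphism of modules,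 (Mod'η)_i and (Mod'θ)_{b,a} are natural transformations, and the lax functor axioms hold. -/
/-!
Statement 7: for an oplax functor `X = (X, η, θ) : I → Cat`, the assignments
`(Mod'X)(i) := Mod X(i)`, `(Mod'X)(a) := (−)∘X(a)` (restriction along `X(a)`),
`((Mod'η)_i M)(x) := M(η_i x)` and `((Mod'θ)_{b,a} M)(x) := M(θ_{b,a}(x))`
define a lax functor `Mod'X : Iᵒᵖ → Cat`.  We formalize this componentwise:
each `(Mod'η)_i M` and `(Mod'θ)_{b,a} M` is a morphism of modules, `(Mod'η)_i`
and `(Mod'θ)_{b,a}` are natural transformations, and the lax functor axioms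
hold.
-/

open CategoryTheory Opposite

universe u v₂ u₂ v₁ u₁

variable {I : Type u₁} [Category.{v₁} I]

/-- Data of an oplax functor from `I` to the 2-category of small categories, with
prescribed values `obj i` on objects. -/
structure OplaxOn (obj : I → Type u₂) [∀ i, Category.{v₂} (obj i)] where
  map : ∀ {i j : I}, (i ⟶ j) → (obj i ⥤ obj j)
  eta : ∀ i : I, map (𝟙 i) ⟶ 𝟭 (obj i)
  theta : ∀ {i j k : I} (a : i ⟶ j) (b : j ⟶ k), map (a ≫ b) ⟶ map a ⋙ map b

variable {obj : I → Type u₂} [∀ i, Category.{v₂} (obj i)]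

/-- The axioms for an oplax functor `I → Cat`. -/
def OplaxOn.IsOplax (X : OplaxOn obj) : Prop :=
  (∀ {i j : I} (a : i ⟶ j),
      X.theta (𝟙 i) a ≫ Functor.whiskerRight (X.eta i) (X.map a)
        = eqToHom (by rw [Category.id_comp, Functor.id_comp])) ∧
  (∀ {i j : I} (a : i ⟶ j),
      X.theta a (𝟙 j) ≫ Functor.whiskerLeft (X.map a) (X.eta j)
        = eqToHom (by rw [Category.comp_id, Functor.comp_id])) ∧
  (∀ {i j k l : I} (a : i ⟶ j) (b : j ⟶ k) (c : k ⟶ l),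
      X.theta a (b ≫ c) ≫ Functor.whiskerLeft (X.map a) (X.theta b c)
        = eqToHom (by rw [Category.assoc]) ≫ X.theta (a ≫ b) c ≫
            Functor.whiskerRight (X.theta a b) (X.map c) ≫ eqToHom (Functor.assoc _ _ _))

variable (k : Type u) [CommRing k]

/-- The category `Mod A` of (right) `A`-modules: contravariant functors from `A`
to the category of `k`-modules. -/
abbrev ModCat (A : Type u₂) [Category.{v₂} A] : Type _ :=
  Aᵒᵖ ⥤ ModuleCat.{u} k

variable {k}
variable (X : OplaxOn obj)

/-- The restriction functor `(Mod'X)(a) = (−)∘X(a) : Mod X(j) ⥤ Mod X(i)`. -/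
def res {i j : I} (a : i ⟶ j) : ModCat k (obj j) ⥤ ModCat k (obj i) :=
  (Functor.whiskeringLeft (obj i)ᵒᵖ (obj j)ᵒᵖ (ModuleCat.{u} k)).obj (X.map a).op

/-- The component at `x` of `(Mod'η)_i M : M ⟶ (Mod'X)(id_i)(M)`, namely
`M(η_i x) : M(x) ⟶ M(X(id_i)x)`. -/
def etaApp (i : I) (M : ModCat k (obj i)) (x : (obj i)ᵒᵖ) :
    M.obj x ⟶ ((res X (𝟙 i)).obj M).obj x :=
  M.map ((X.eta i).app x.unop).op

/-- The component at `x` of `(Mod'θ)_{b,a} M : (Mod'X)(a)((Mod'X)(b)(M)) ⟶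
(Mod'X)(ba)(M)`, namely `M(θ_{b,a}(x)) : M(X(b)(X(a)x)) ⟶ M(X(ba)x)`. -/
def thetaApp {i j l : I} (a : i ⟶ j) (b : j ⟶ l) (M : ModCat k (obj l))
    (x : (obj i)ᵒᵖ) :
    ((res X a).obj ((res X b).obj M)).obj x ⟶ ((res X (a ≫ b)).obj M).obj x :=
  M.map ((X.theta a b).app x.unop).op

/-- For an oplax functor `X : I → Cat`, the data
`(Mod'X, Mod'η, Mod'θ)` is a well-defined lax functor `Iᵒᵖ → Cat`:
the components `((Mod'η)_i M)(x) = M(η_i x)` and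
`((Mod'θ)_{b,a} M)(x) = M(θ_{b,a} x)` are morphisms of modules (naturality in
`x`), they are natural in `M`, and the lax functor axioms hold. -/
theorem modPrime_is_lax_functor (hX : X.IsOplax) :
    -- each (Mod'η)_i M is a morphism of modules
    (∀ (i : I) (M : ModCat k (obj i)) {x y : (obj i)ᵒᵖ} (f : x ⟶ y),
      M.map f ≫ etaApp X i M y = etaApp X i M x ≫ ((res X (𝟙 i)).obj M).map f) ∧
    -- (Mod'η)_i is a natural transformation 𝟭 ⟶ (Mod'X)(id_i)
    (∀ (i : I) (M N : ModCat k (obj i)) (g : M ⟶ N) (x : (obj i)ᵒᵖ),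
      g.app x ≫ etaApp X i N x = etaApp X i M x ≫ ((res X (𝟙 i)).map g).app x) ∧
    -- each (Mod'θ)_{b,a} M is a morphism of modules
    (∀ {i j l : I} (a : i ⟶ j) (b : j ⟶ l) (M : ModCat k (obj l))
        {x y : (obj i)ᵒᵖ} (f : x ⟶ y),
      ((res X a).obj ((res X b).obj M)).map f ≫ thetaApp X a b M y
        = thetaApp X a b M x ≫ ((res X (a ≫ b)).obj M).map f) ∧
    -- (Mod'θ)_{b,a} is a natural transformation (Mod'X)(a)∘(Mod'X)(b) ⟶ (Mod'X)(ba)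
    (∀ {i j l : I} (a : i ⟶ j) (b : j ⟶ l) (M N : ModCat k (obj l)) (g : M ⟶ N)
        (x : (obj i)ᵒᵖ),
      ((res X a).map ((res X b).map g)).app x ≫ thetaApp X a b N x
        = thetaApp X a b M x ≫ ((res X (a ≫ b)).map g).app x) ∧
    -- lax functor axioms (componentwise): unit axioms
    (∀ {i j : I} (a : i ⟶ j) (M : ModCat k (obj j)) (x : (obj i)ᵒᵖ),
      etaApp X i ((res X a).obj M) x ≫ thetaApp X (𝟙 i) a M x
        = eqToHom (congrArg (fun t : i ⟶ j => ((res X t).obj M).obj x)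
            (Category.id_comp a)).symm) ∧
    (∀ {i j : I} (a : i ⟶ j) (M : ModCat k (obj j)) (x : (obj i)ᵒᵖ),
      etaApp X j M ((X.map a).op.obj x) ≫ thetaApp X a (𝟙 j) M x
        = eqToHom (congrArg (fun t : i ⟶ j => ((res X t).obj M).obj x)
            (Category.comp_id a)).symm) ∧
    -- lax functor axioms (componentwise): associativity axiom
    (∀ {i j l m : I} (a : i ⟶ j) (b : j ⟶ l) (c : l ⟶ m) (M : ModCat k (obj m))
        (x : (obj i)ᵒᵖ),
      thetaApp X b c M ((X.map a).op.obj x) ≫ thetaApp X a (b ≫ c) M x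
        = thetaApp X a b ((res X c).obj M) x ≫ thetaApp X (a ≫ b) c M x ≫
            eqToHom (congrArg (fun t : i ⟶ m => ((res X t).obj M).obj x)
              (Category.assoc a b c))) := by
  obtain ⟨h1, h2, h3⟩ := hX
  refine ⟨?_, ?_, ?_, ?_, ?_, ?_, ?_⟩
  · intro i M x y f
    simp only [etaApp, res, Functor.whiskeringLeft_obj_obj, Functor.comp_map, Functor.op_map,
      ← M.map_comp, ← op_comp, Quiver.Hom.unop_op, NatTrans.naturality]
    simp
  · intro i M N g x
    exact (g.naturality _).symm
  · intro i j l a b M x y f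
    simp only [thetaApp, res, Functor.whiskeringLeft_obj_obj, Functor.comp_map, Functor.op_map,
      ← M.map_comp, ← op_comp, Quiver.Hom.unop_op, NatTrans.naturality]
  · intro i j l a b M N g x
    exact (g.naturality _).symm
  · intro i j a M x
    have := congrArg (fun t => t.app x.unop) (h1 a)
    simp only [NatTrans.comp_app, Functor.whiskerRight_app, eqToHom_app] at this
    simp only [etaApp, thetaApp, res, Functor.whiskeringLeft_obj_obj, Functor.comp_map,
      Functor.op_map, Functor.op_obj, unop_op, Quiver.Hom.unop_op]
    rw [← M.map_comp, ← op_comp, this]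
    simp [eqToHom_map]
  · intro i j a M x
    have := congrArg (fun t => t.app x.unop) (h2 a)
    simp only [NatTrans.comp_app, Functor.whiskerLeft_app, eqToHom_app] at this
    simp only [etaApp, thetaApp, res, Functor.whiskeringLeft_obj_obj, Functor.comp_map,
      Functor.op_map, Functor.op_obj, unop_op, Quiver.Hom.unop_op]
    rw [← M.map_comp, ← op_comp, this]
    simp [eqToHom_map]
  · intro i j l m a b c M x
    have := congrArg (fun t => t.app x.unop) (h3 a b c)
    simp only [NatTrans.comp_app, Functor.whiskerLeft_app, Functor.whiskerRight_app, eqToHom_app] at this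
    simp only [etaApp, thetaApp, res, Functor.whiskeringLeft_obj_obj, Functor.comp_map,
      Functor.op_map, Functor.op_obj, unop_op, Quiver.Hom.unop_op]
    rw [← M.map_comp, ← op_comp, this]
    simp [eqToHom_map]
end

section
/- Let I be a small category and Y' = (Y', η', θ') : Iᵒᵖ → Cat a lax functor to the 2-category of categories. Assume that for each morphism a : i → j of I the functor Y'(a) : Y'(j) → Y'(i) has a left adjoint Y(a) : Y'(i) → Y'(j), with unit ε_a : id_{Y'(i)} ⇒ Y'(a)Y(a) and counit ζ_a : Y(a)Y'(a) ⇒ id_{Y'(j)}. Set Y(i) := Y'(i) for each object i, define η_i : Y(id_i) ⇒ id_{Y(i)} as the composite ζ_{id_i} ∘ (Y(id_i)η'_i), and define θ_{b,a} : Y(ba) ⇒ Y(b)Y(a) for each composable pair a : i → j, b : j → k as the composite (ζ_{ba}Y(b)Y(a)) ∘ (Y(ba)θ'_{b,a}Y(b)Y(a)) ∘ (Y(ba)Y'(a)ε_b Y(a)) ∘ (Y(ba)ε_a). Then Y = (Y, η, θ) is an oplax functor I → Cat. -/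
/-!
Statement 8: if `Y' = (Y', η', θ') : Iᵒᵖ → Cat` is a lax functor such that each
`Y'(a)` has a left adjoint `Y(a)` (with unit `ε_a` and counit `ζ_a`), then setting
`Y(i) := Y'(i)`, `η_i := ζ_{id_i} ∘ (Y(id_i)η'_i)` and
`θ_{b,a} := (ζ_{ba}Y(b)Y(a)) ∘ (Y(ba)θ'_{b,a}Y(b)Y(a)) ∘ (Y(ba)Y'(a)ε_b Y(a)) ∘ (Y(ba)ε_a)`
yields an oplax functor `Y = (Y, η, θ) : I → Cat`.
-/

open CategoryTheory Opposite

universe v₂ u₂ v₁ u₁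

variable {I : Type u₁} [Category.{v₁} I]

/-- Data of a lax functor from `I` to the 2-category of categories, with
prescribed values `obj i` on objects. -/
structure LaxOn (obj : I → Type u₂) [∀ i, Category.{v₂} (obj i)] where
  map : ∀ {i j : I}, (i ⟶ j) → (obj i ⥤ obj j)
  eta : ∀ i : I, 𝟭 (obj i) ⟶ map (𝟙 i)
  theta : ∀ {i j k : I} (a : i ⟶ j) (b : j ⟶ k), map a ⋙ map b ⟶ map (a ≫ b)

variable {obj : I → Type u₂} [∀ i, Category.{v₂} (obj i)]

/-- The axioms for a lax functor `I → Cat`. -/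
def LaxOn.IsLax (Y : LaxOn obj) : Prop :=
  (∀ {i j : I} (a : i ⟶ j),
      Functor.whiskerRight (Y.eta i) (Y.map a) ≫ Y.theta (𝟙 i) a
        = eqToHom (by rw [Category.id_comp, Functor.id_comp])) ∧
  (∀ {i j : I} (a : i ⟶ j),
      Functor.whiskerLeft (Y.map a) (Y.eta j) ≫ Y.theta a (𝟙 j)
        = eqToHom (by rw [Category.comp_id, Functor.comp_id])) ∧
  (∀ {i j k l : I} (a : i ⟶ j) (b : j ⟶ k) (c : k ⟶ l),
      Functor.whiskerLeft (Y.map a) (Y.theta b c) ≫ Y.theta a (b ≫ c)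
        = eqToHom (Functor.assoc _ _ _).symm ≫ Functor.whiskerRight (Y.theta a b) (Y.map c) ≫
            Y.theta (a ≫ b) c ≫ eqToHom (by rw [Category.assoc]))

variable {objf : I → Type u₂} [∀ i, Category.{v₂} (objf i)]


/-- Pairwise congruence under a functor. -/
theorem mapPair {C : Type u₂} [Category.{v₂} C] {D : Type u₂} [Category.{v₂} D] (F : C ⥤ D)
    {w X X' y : C} {f : w ⟶ X} {g : X ⟶ y} {f' : w ⟶ X'} {g' : X' ⟶ y}
    (h : f ≫ g = f' ≫ g') : F.map f ≫ F.map g = F.map f' ≫ F.map g' := by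
  rw [← F.map_comp, ← F.map_comp, h]

/-- Pairwise congruence under a functor, collapsed form. -/
theorem mapPairOne {C : Type u₂} [Category.{v₂} C] {D : Type u₂} [Category.{v₂} D] (F : C ⥤ D)
    {w X y : C} {f : w ⟶ X} {g : X ⟶ y} {k : w ⟶ y}
    (h : f ≫ g = k) : F.map f ≫ F.map g = F.map k := by
  rw [← F.map_comp, h]

section AuxLemmas

variable (Y' : LaxOn (fun i : Iᵒᵖ => objf i.unop))
    (L : ∀ {i j : I}, (i ⟶ j) → (objf i ⥤ objf j))
    (adj : ∀ {i j : I} (a : i ⟶ j), L a ⊣ Y'.map a.op)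

/-- Roundtrip of the adjunction: transposing back gives the original. -/
lemma unit_tr {i j : I} (a : i ⟶ j) {x : objf i} {z : objf j}
    (u : x ⟶ (Y'.map a.op).obj z) :
    (adj a).unit.app x ≫ (Y'.map a.op).map ((L a).map u ≫ (adj a).counit.app z) = u := by
  rw [Functor.map_comp, ← Category.assoc]
  erw [(adj a).unit_naturality]
  rw [Category.assoc,
    Adjunction.right_triangle_components, Category.comp_id]

/-- Transport of a transposed morphism along an equality of morphisms in `I`. -/
lemma tr_congr {i j : I} {a b : i ⟶ j} (e : a = b) {x : objf i} {z : objf j}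
    (u : x ⟶ (Y'.map a.op).obj z) (v : x ⟶ (Y'.map b.op).obj z)
    (huv : u ≫ eqToHom (by rw [e]) = v) :
    (L a).map u ≫ (adj a).counit.app z
      = eqToHom (show (L a).obj x = (L b).obj x by rw [e]) ≫ (L b).map v ≫ (adj b).counit.app z := by
  subst e
  subst huv
  simp

/-- Endgame for the unit axioms. -/
lemma tr_endgame {i j : I} {a b : i ⟶ j} (e : a = b) (x : objf i)
    (H : (Y'.map a.op).obj ((L a).obj x) = (Y'.map b.op).obj ((L a).obj x))
    (H' : (L b).obj x = (L a).obj x) :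
    (L b).map ((adj a).unit.app x) ≫ (L b).map (eqToHom H) ≫ (adj b).counit.app ((L a).obj x)
      = eqToHom H' := by
  subst e
  simp

end AuxLemmas

/-- The oplax functor `Y : I → Cat` obtained from a lax functor `Y' : Iᵒᵖ → Cat`
whose 1-morphism components all have left adjoints: `Y(i) := Y'(i)`, `Y(a) := L a`,
`η_i := ζ_{id_i} ∘ (Y(id_i)η'_i)`, and `θ_{b,a}` the composite
`(ζ_{ba}Y(b)Y(a)) ∘ (Y(ba)θ'_{b,a}Y(b)Y(a)) ∘ (Y(ba)Y'(a)ε_b Y(a)) ∘ (Y(ba)ε_a)`. -/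
def inducedOplaxOfLax (Y' : LaxOn (fun i : Iᵒᵖ => objf i.unop))
    (L : ∀ {i j : I}, (i ⟶ j) → (objf i ⥤ objf j))
    (adj : ∀ {i j : I} (a : i ⟶ j), L a ⊣ Y'.map a.op) :
    OplaxOn objf where
  map a := L a
  eta i := Functor.whiskerRight (Y'.eta (op i)) (L (𝟙 i)) ≫ (adj (𝟙 i)).counit
  theta {i j k} a b :=
    Functor.whiskerRight (adj a).unit (L (a ≫ b)) ≫
      Functor.whiskerLeft (L a) (Functor.whiskerRight (Functor.whiskerRight (adj b).unit (Y'.map a.op)) (L (a ≫ b))) ≫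
      Functor.whiskerLeft (L a ⋙ L b) (Functor.whiskerRight (Y'.theta b.op a.op) (L (a ≫ b))) ≫
      Functor.whiskerLeft (L a ⋙ L b) (adj (a ≫ b)).counit

/-- Let `Y' : Iᵒᵖ → Cat` be a lax functor such that each `Y'(a)`
has a left adjoint `Y(a) = L a` (with unit `ε_a` and counit `ζ_a`).  Then the data
`Y(i) := Y'(i)`, `Y(a) := L a`, with the structure 2-morphisms defined above,
constitute an oplax functor `I → Cat`. -/
theorem inducedOplaxOfLax_isOplax (Y' : LaxOn (fun i : Iᵒᵖ => objf i.unop))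
    (hY' : Y'.IsLax) (L : ∀ {i j : I}, (i ⟶ j) → (objf i ⥤ objf j))
    (adj : ∀ {i j : I} (a : i ⟶ j), L a ⊣ Y'.map a.op) :
    (inducedOplaxOfLax Y' L adj).IsOplax := by
  refine ⟨fun {i j} a => ?_, fun {i j} a => ?_, fun {i j k l} a b c => ?_⟩
  · ext x
    simp only [NatTrans.comp_app, eqToHom_app]
    simp only [inducedOplaxOfLax, NatTrans.comp_app, Functor.whiskerRight_app, Functor.whiskerLeft_app,
      Functor.comp_obj, Functor.comp_map, Functor.id_obj, eqToHom_app, Functor.map_comp,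
      Category.assoc]
    rw [← Functor.map_comp]
    have s2 : (adj (𝟙 i ≫ a)).counit.app ((L a).obj ((L (𝟙 i)).obj x)) ≫
        (L a).map ((L (𝟙 i)).map ((Y'.eta (op i)).app x) ≫ (adj (𝟙 i)).counit.app x)
        = (L (𝟙 i ≫ a)).map ((Y'.map (𝟙 i ≫ a).op).map ((L a).map
            ((L (𝟙 i)).map ((Y'.eta (op i)).app x) ≫ (adj (𝟙 i)).counit.app x))) ≫
          (adj (𝟙 i ≫ a)).counit.app ((L a).obj x) :=
      ((adj (𝟙 i ≫ a)).counit.naturality _).symm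
    rw [s2]
    have s3i : (Y'.theta a.op (𝟙 i).op).app ((L a).obj ((L (𝟙 i)).obj x)) ≫
        (Y'.map (𝟙 i ≫ a).op).map ((L a).map
            ((L (𝟙 i)).map ((Y'.eta (op i)).app x) ≫ (adj (𝟙 i)).counit.app x))
        = (Y'.map (𝟙 i).op).map ((Y'.map a.op).map ((L a).map
            ((L (𝟙 i)).map ((Y'.eta (op i)).app x) ≫ (adj (𝟙 i)).counit.app x))) ≫
          (Y'.theta a.op (𝟙 i).op).app ((L a).obj x) :=
      ((Y'.theta a.op (𝟙 i).op).naturality _).symm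
    rw [reassoc_of% (mapPair (L (𝟙 i ≫ a)) s3i)]
    have s4i : (adj a).unit.app ((L (𝟙 i)).obj x) ≫ (Y'.map a.op).map ((L a).map
            ((L (𝟙 i)).map ((Y'.eta (op i)).app x) ≫ (adj (𝟙 i)).counit.app x))
        = ((L (𝟙 i)).map ((Y'.eta (op i)).app x) ≫ (adj (𝟙 i)).counit.app x) ≫
          (adj a).unit.app x :=
      ((adj a).unit.naturality _).symm
    rw [reassoc_of% (mapPair (L (𝟙 i ≫ a)) (mapPair (Y'.map (𝟙 i).op) s4i))]
    simp only [Functor.map_comp, Category.assoc]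
    have s5i : (adj (𝟙 i)).unit.app x ≫ (Y'.map (𝟙 i).op).map ((L (𝟙 i)).map ((Y'.eta (op i)).app x))
        = (Y'.eta (op i)).app x ≫ (adj (𝟙 i)).unit.app ((Y'.map (𝟙 i).op).obj x) :=
      ((adj (𝟙 i)).unit.naturality _).symm
    rw [reassoc_of% (mapPair (L (𝟙 i ≫ a)) s5i)]
    have s6 : (L (𝟙 i ≫ a)).map ((adj (𝟙 i)).unit.app ((Y'.map (𝟙 i).op).obj x)) ≫
        (L (𝟙 i ≫ a)).map ((Y'.map (𝟙 i).op).map ((adj (𝟙 i)).counit.app x)) = 𝟙 _ := by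
      rw [← Functor.map_comp, Adjunction.right_triangle_components]; simp
    rw [reassoc_of% s6]
    have s7i : (Y'.eta (op i)).app x ≫ (Y'.map (𝟙 i).op).map ((adj a).unit.app x)
        = (adj a).unit.app x ≫ (Y'.eta (op i)).app ((Y'.map a.op).obj ((L a).obj x)) :=
      ((Y'.eta (op i)).naturality _).symm
    rw [reassoc_of% (mapPair (L (𝟙 i ≫ a)) s7i)]
    have h2c : (Y'.eta (op i)).app ((Y'.map a.op).obj ((L a).obj x)) ≫
        (Y'.theta a.op (𝟙 i).op).app ((L a).obj x)
        = eqToHom (show (Y'.map a.op).obj ((L a).obj x)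
            = (Y'.map (a.op ≫ (𝟙 i).op)).obj ((L a).obj x) by rw [← op_comp, Category.id_comp]) := by
      simpa using congr_app (hY'.2.1 a.op) ((L a).obj x)
    rw [reassoc_of% (mapPairOne (L (𝟙 i ≫ a)) h2c)]
    exact tr_endgame Y' L adj (Category.id_comp a).symm x _ _
  · ext x
    simp only [NatTrans.comp_app, eqToHom_app]
    simp only [inducedOplaxOfLax, NatTrans.comp_app, Functor.whiskerRight_app, Functor.whiskerLeft_app,
      Functor.comp_obj, Functor.comp_map, Functor.id_obj, eqToHom_app, Functor.map_comp,
      Category.assoc]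
    have s2 : (adj (a ≫ 𝟙 j)).counit.app ((L (𝟙 j)).obj ((L a).obj x)) ≫
        (L (𝟙 j)).map ((Y'.eta (op j)).app ((L a).obj x)) ≫ (adj (𝟙 j)).counit.app ((L a).obj x)
        = (L (a ≫ 𝟙 j)).map ((Y'.map (a ≫ 𝟙 j).op).map ((L (𝟙 j)).map ((Y'.eta (op j)).app ((L a).obj x)) ≫
            (adj (𝟙 j)).counit.app ((L a).obj x))) ≫
          (adj (a ≫ 𝟙 j)).counit.app ((L a).obj x) :=
      ((adj (a ≫ 𝟙 j)).counit.naturality _).symm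
    rw [s2]
    have s3i : (Y'.theta (𝟙 j).op a.op).app ((L (𝟙 j)).obj ((L a).obj x)) ≫
        (Y'.map (a ≫ 𝟙 j).op).map ((L (𝟙 j)).map ((Y'.eta (op j)).app ((L a).obj x)) ≫
            (adj (𝟙 j)).counit.app ((L a).obj x))
        = (Y'.map a.op).map ((Y'.map (𝟙 j).op).map ((L (𝟙 j)).map ((Y'.eta (op j)).app ((L a).obj x)) ≫
            (adj (𝟙 j)).counit.app ((L a).obj x))) ≫
          (Y'.theta (𝟙 j).op a.op).app ((L a).obj x) :=
      ((Y'.theta (𝟙 j).op a.op).naturality _).symm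
    rw [reassoc_of% (mapPair (L (a ≫ 𝟙 j)) s3i)]
    have s4i : (adj (𝟙 j)).unit.app ((L a).obj x) ≫
        (Y'.map (𝟙 j).op).map ((L (𝟙 j)).map ((Y'.eta (op j)).app ((L a).obj x)) ≫
            (adj (𝟙 j)).counit.app ((L a).obj x))
        = (Y'.eta (op j)).app ((L a).obj x) :=
      unit_tr Y' L adj (𝟙 j) _
    rw [reassoc_of% (mapPairOne (L (a ≫ 𝟙 j)) (mapPairOne (Y'.map a.op) s4i))]
    have h1c : (Y'.map a.op).map ((Y'.eta (op j)).app ((L a).obj x)) ≫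
        (Y'.theta (𝟙 j).op a.op).app ((L a).obj x)
        = eqToHom (show (Y'.map a.op).obj ((L a).obj x)
            = (Y'.map ((𝟙 j).op ≫ a.op)).obj ((L a).obj x) by rw [← op_comp, Category.comp_id]) := by
      simpa using congr_app (hY'.1 a.op) ((L a).obj x)
    rw [reassoc_of% (mapPairOne (L (a ≫ 𝟙 j)) h1c)]
    exact tr_endgame Y' L adj (Category.comp_id a).symm x _ _
  · ext x
    simp only [NatTrans.comp_app, eqToHom_app]
    simp only [inducedOplaxOfLax, NatTrans.comp_app, Functor.whiskerRight_app, Functor.whiskerLeft_app,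
      Functor.comp_obj, Functor.comp_map, Functor.id_obj, eqToHom_app, eqToHom_refl,
      Category.comp_id, Functor.map_comp, Category.assoc]
    erw [eqToHom_refl, Category.comp_id]
    -- LHS reduction
    have sL1 : (adj (a ≫ b ≫ c)).counit.app ((L (b ≫ c)).obj ((L a).obj x)) ≫
        ((L (b ≫ c)).map ((adj b).unit.app ((L a).obj x)) ≫
          (L (b ≫ c)).map ((Y'.map b.op).map ((adj c).unit.app ((L b).obj ((L a).obj x)))) ≫
          (L (b ≫ c)).map ((Y'.theta c.op b.op).app ((L c).obj ((L b).obj ((L a).obj x)))) ≫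
          (adj (b ≫ c)).counit.app ((L c).obj ((L b).obj ((L a).obj x))))
        = (L (a ≫ b ≫ c)).map ((Y'.map (a ≫ b ≫ c).op).map
            ((L (b ≫ c)).map ((adj b).unit.app ((L a).obj x)) ≫
              (L (b ≫ c)).map ((Y'.map b.op).map ((adj c).unit.app ((L b).obj ((L a).obj x)))) ≫
              (L (b ≫ c)).map ((Y'.theta c.op b.op).app ((L c).obj ((L b).obj ((L a).obj x)))) ≫
              (adj (b ≫ c)).counit.app ((L c).obj ((L b).obj ((L a).obj x))))) ≫
          (adj (a ≫ b ≫ c)).counit.app ((L c).obj ((L b).obj ((L a).obj x))) :=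
      ((adj (a ≫ b ≫ c)).counit.naturality _).symm
    rw [sL1]
    have sL2 : (Y'.theta (b ≫ c).op a.op).app ((L (b ≫ c)).obj ((L a).obj x)) ≫
        (Y'.map (a ≫ b ≫ c).op).map
            ((L (b ≫ c)).map ((adj b).unit.app ((L a).obj x)) ≫
              (L (b ≫ c)).map ((Y'.map b.op).map ((adj c).unit.app ((L b).obj ((L a).obj x)))) ≫
              (L (b ≫ c)).map ((Y'.theta c.op b.op).app ((L c).obj ((L b).obj ((L a).obj x)))) ≫
              (adj (b ≫ c)).counit.app ((L c).obj ((L b).obj ((L a).obj x))))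
        = (Y'.map a.op).map ((Y'.map (b ≫ c).op).map
            ((L (b ≫ c)).map ((adj b).unit.app ((L a).obj x)) ≫
              (L (b ≫ c)).map ((Y'.map b.op).map ((adj c).unit.app ((L b).obj ((L a).obj x)))) ≫
              (L (b ≫ c)).map ((Y'.theta c.op b.op).app ((L c).obj ((L b).obj ((L a).obj x)))) ≫
              (adj (b ≫ c)).counit.app ((L c).obj ((L b).obj ((L a).obj x))))) ≫
          (Y'.theta (b ≫ c).op a.op).app ((L c).obj ((L b).obj ((L a).obj x))) :=
      ((Y'.theta (b ≫ c).op a.op).naturality _).symm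
    rw [reassoc_of% (mapPair (L (a ≫ b ≫ c)) sL2)]
    have sL3 : (adj (b ≫ c)).unit.app ((L a).obj x) ≫ (Y'.map (b ≫ c).op).map
            ((L (b ≫ c)).map ((adj b).unit.app ((L a).obj x)) ≫
              (L (b ≫ c)).map ((Y'.map b.op).map ((adj c).unit.app ((L b).obj ((L a).obj x)))) ≫
              (L (b ≫ c)).map ((Y'.theta c.op b.op).app ((L c).obj ((L b).obj ((L a).obj x)))) ≫
              (adj (b ≫ c)).counit.app ((L c).obj ((L b).obj ((L a).obj x))))
        = (adj b).unit.app ((L a).obj x) ≫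
            (Y'.map b.op).map ((adj c).unit.app ((L b).obj ((L a).obj x))) ≫
            (Y'.theta c.op b.op).app ((L c).obj ((L b).obj ((L a).obj x))) := by
      simp
    rw [reassoc_of% (mapPairOne (L (a ≫ b ≫ c)) (mapPairOne (Y'.map a.op) sL3))]
    have mL : (L (a ≫ b ≫ c)).map ((adj a).unit.app x) ≫
        (L (a ≫ b ≫ c)).map ((Y'.map a.op).map ((adj b).unit.app ((L a).obj x) ≫
            (Y'.map b.op).map ((adj c).unit.app ((L b).obj ((L a).obj x))) ≫
            (Y'.theta c.op b.op).app ((L c).obj ((L b).obj ((L a).obj x))))) ≫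
        (L (a ≫ b ≫ c)).map ((Y'.theta (b ≫ c).op a.op).app ((L c).obj ((L b).obj ((L a).obj x)))) ≫
        (adj (a ≫ b ≫ c)).counit.app ((L c).obj ((L b).obj ((L a).obj x)))
        = (L (a ≫ b ≫ c)).map ((adj a).unit.app x ≫
            (Y'.map a.op).map ((adj b).unit.app ((L a).obj x) ≫
              (Y'.map b.op).map ((adj c).unit.app ((L b).obj ((L a).obj x))) ≫
              (Y'.theta c.op b.op).app ((L c).obj ((L b).obj ((L a).obj x)))) ≫
            (Y'.theta (b ≫ c).op a.op).app ((L c).obj ((L b).obj ((L a).obj x)))) ≫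
          (adj (a ≫ b ≫ c)).counit.app ((L c).obj ((L b).obj ((L a).obj x))) := by
      simp
    rw [mL]
    -- RHS reduction
    have sR1 : (adj ((a ≫ b) ≫ c)).counit.app ((L c).obj ((L (a ≫ b)).obj x)) ≫
        ((L c).map ((L (a ≫ b)).map ((adj a).unit.app x)) ≫
          (L c).map ((L (a ≫ b)).map ((Y'.map a.op).map ((adj b).unit.app ((L a).obj x)))) ≫
          (L c).map ((L (a ≫ b)).map ((Y'.theta b.op a.op).app ((L b).obj ((L a).obj x)))) ≫
          (L c).map ((adj (a ≫ b)).counit.app ((L b).obj ((L a).obj x))))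
        = (L ((a ≫ b) ≫ c)).map ((Y'.map ((a ≫ b) ≫ c).op).map
            ((L c).map ((L (a ≫ b)).map ((adj a).unit.app x)) ≫
              (L c).map ((L (a ≫ b)).map ((Y'.map a.op).map ((adj b).unit.app ((L a).obj x)))) ≫
              (L c).map ((L (a ≫ b)).map ((Y'.theta b.op a.op).app ((L b).obj ((L a).obj x)))) ≫
              (L c).map ((adj (a ≫ b)).counit.app ((L b).obj ((L a).obj x))))) ≫
          (adj ((a ≫ b) ≫ c)).counit.app ((L c).obj ((L b).obj ((L a).obj x))) :=
      ((adj ((a ≫ b) ≫ c)).counit.naturality _).symm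
    rw [sR1]
    have sR2 : (Y'.theta c.op (a ≫ b).op).app ((L c).obj ((L (a ≫ b)).obj x)) ≫
        (Y'.map ((a ≫ b) ≫ c).op).map
            ((L c).map ((L (a ≫ b)).map ((adj a).unit.app x)) ≫
              (L c).map ((L (a ≫ b)).map ((Y'.map a.op).map ((adj b).unit.app ((L a).obj x)))) ≫
              (L c).map ((L (a ≫ b)).map ((Y'.theta b.op a.op).app ((L b).obj ((L a).obj x)))) ≫
              (L c).map ((adj (a ≫ b)).counit.app ((L b).obj ((L a).obj x))))
        = (Y'.map (a ≫ b).op).map ((Y'.map c.op).map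
            ((L c).map ((L (a ≫ b)).map ((adj a).unit.app x)) ≫
              (L c).map ((L (a ≫ b)).map ((Y'.map a.op).map ((adj b).unit.app ((L a).obj x)))) ≫
              (L c).map ((L (a ≫ b)).map ((Y'.theta b.op a.op).app ((L b).obj ((L a).obj x)))) ≫
              (L c).map ((adj (a ≫ b)).counit.app ((L b).obj ((L a).obj x))))) ≫
          (Y'.theta c.op (a ≫ b).op).app ((L c).obj ((L b).obj ((L a).obj x))) :=
      ((Y'.theta c.op (a ≫ b).op).naturality _).symm
    rw [reassoc_of% (mapPair (L ((a ≫ b) ≫ c)) sR2)]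
    have sR3 : (adj c).unit.app ((L (a ≫ b)).obj x) ≫ (Y'.map c.op).map
            ((L c).map ((L (a ≫ b)).map ((adj a).unit.app x)) ≫
              (L c).map ((L (a ≫ b)).map ((Y'.map a.op).map ((adj b).unit.app ((L a).obj x)))) ≫
              (L c).map ((L (a ≫ b)).map ((Y'.theta b.op a.op).app ((L b).obj ((L a).obj x)))) ≫
              (L c).map ((adj (a ≫ b)).counit.app ((L b).obj ((L a).obj x))))
        = ((L (a ≫ b)).map ((adj a).unit.app x) ≫
            (L (a ≫ b)).map ((Y'.map a.op).map ((adj b).unit.app ((L a).obj x))) ≫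
            (L (a ≫ b)).map ((Y'.theta b.op a.op).app ((L b).obj ((L a).obj x))) ≫
            (adj (a ≫ b)).counit.app ((L b).obj ((L a).obj x))) ≫
          (adj c).unit.app ((L b).obj ((L a).obj x)) := by
      simp
    rw [reassoc_of% (mapPairOne (L ((a ≫ b) ≫ c)) (mapPairOne (Y'.map (a ≫ b).op) sR3))]
    have sR4 : (adj (a ≫ b)).unit.app x ≫ (Y'.map (a ≫ b).op).map
            (((L (a ≫ b)).map ((adj a).unit.app x) ≫
              (L (a ≫ b)).map ((Y'.map a.op).map ((adj b).unit.app ((L a).obj x))) ≫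
              (L (a ≫ b)).map ((Y'.theta b.op a.op).app ((L b).obj ((L a).obj x))) ≫
              (adj (a ≫ b)).counit.app ((L b).obj ((L a).obj x))) ≫
            (adj c).unit.app ((L b).obj ((L a).obj x)))
        = ((adj a).unit.app x ≫
            (Y'.map a.op).map ((adj b).unit.app ((L a).obj x)) ≫
            (Y'.theta b.op a.op).app ((L b).obj ((L a).obj x))) ≫
          (Y'.map (a ≫ b).op).map ((adj c).unit.app ((L b).obj ((L a).obj x))) := by
      simp
    rw [reassoc_of% (mapPairOne (L ((a ≫ b) ≫ c)) sR4)]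
    have nb : (Y'.theta b.op a.op).app ((L b).obj ((L a).obj x)) ≫
        (Y'.map (a ≫ b).op).map ((adj c).unit.app ((L b).obj ((L a).obj x)))
        = (Y'.map a.op).map ((Y'.map b.op).map ((adj c).unit.app ((L b).obj ((L a).obj x)))) ≫
          (Y'.theta b.op a.op).app ((Y'.map c.op).obj ((L c).obj ((L b).obj ((L a).obj x)))) :=
      ((Y'.theta b.op a.op).naturality _).symm
    have innerR : (((adj a).unit.app x ≫
            (Y'.map a.op).map ((adj b).unit.app ((L a).obj x)) ≫
            (Y'.theta b.op a.op).app ((L b).obj ((L a).obj x))) ≫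
          (Y'.map (a ≫ b).op).map ((adj c).unit.app ((L b).obj ((L a).obj x)))) ≫
        (Y'.theta c.op (a ≫ b).op).app ((L c).obj ((L b).obj ((L a).obj x)))
        = (adj a).unit.app x ≫
            (Y'.map a.op).map ((adj b).unit.app ((L a).obj x)) ≫
            (Y'.map a.op).map ((Y'.map b.op).map ((adj c).unit.app ((L b).obj ((L a).obj x)))) ≫
            (Y'.theta b.op a.op).app ((Y'.map c.op).obj ((L c).obj ((L b).obj ((L a).obj x)))) ≫
            (Y'.theta c.op (a ≫ b).op).app ((L c).obj ((L b).obj ((L a).obj x))) := by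
      simp only [Category.assoc]
      rw [reassoc_of% nb]
    rw [reassoc_of% (mapPairOne (L ((a ≫ b) ≫ c)) innerR)]
    -- conclude via transport along associativity and the lax associativity axiom
    refine tr_congr Y' L adj (Category.assoc a b c).symm _ _ ?_
    have h3 : (Y'.theta b.op a.op).app ((Y'.map c.op).obj ((L c).obj ((L b).obj ((L a).obj x)))) ≫
        (Y'.theta c.op (a ≫ b).op).app ((L c).obj ((L b).obj ((L a).obj x)))
        = (Y'.map a.op).map ((Y'.theta c.op b.op).app ((L c).obj ((L b).obj ((L a).obj x)))) ≫
          (Y'.theta (b ≫ c).op a.op).app ((L c).obj ((L b).obj ((L a).obj x))) ≫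
          eqToHom (show (Y'.map ((b ≫ c).op ≫ a.op)).obj ((L c).obj ((L b).obj ((L a).obj x)))
              = (Y'.map (c.op ≫ (a ≫ b).op)).obj ((L c).obj ((L b).obj ((L a).obj x)))
            by simp [← op_comp]) := by
      simpa using congr_app (hY'.2.2 c.op b.op a.op) ((L c).obj ((L b).obj ((L a).obj x)))
    simp only [Category.assoc, Functor.map_comp]
    rw [h3]
end

section
/- Let X = (X, η, θ) : I → Cat be an oplax functor from a small category I to the 2-category of small categories. For each object i of I, let Y(i) be a small category and L_i : X(i) → Y(i) a functor with right adjoint R_i : Y(i) → X(i), unit ε_i : id_{X(i)} ⇒ R_iL_i and counit ζ_i : L_iR_i ⇒ id_{Y(i)}. For each a : i → j define Y(a) := L_j X(a) R_i : Y(i) → Y(j); define η'_i : Y(id_i) ⇒ id_{Y(i)} as the composite ζ_i ∘ (L_i η_i R_i); and for each composable pair a : i → j, b : j → k define θ'_{b,a} : Y(ba) ⇒ Y(b)Y(a) as the composite (L_k X(b) ε_j X(a) R_i) ∘ (L_k θ_{b,a} R_i). Then Y = (Y, η', θ') is an oplax functor I → Cat, called the oplax functor induced from X by the adjoint pairs (L_i,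 R_i). -/
/-!
Statement 14: if `X = (X, η, θ) : I → Cat` is an oplax functor and for each object
`i` we are given an adjoint pair `L_i : X(i) → Y(i)`, `R_i : Y(i) → X(i)`
(`L_i ⊣ R_i`, unit `ε_i`, counit `ζ_i`), then `Y(a) := L_j X(a) R_i`,
`η'_i := ζ_i ∘ (L_i η_i R_i)` and
`θ'_{b,a} := (L_k X(b) ε_j X(a) R_i) ∘ (L_k θ_{b,a} R_i)` define an oplax functor
`Y = (Y, η', θ') : I → Cat`, the oplax functor induced from `X` by the adjoint
pairs `(L_i, R_i)`.
-/

open CategoryTheory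

universe v₂ u₂ v₁ u₁

variable {I : Type u₁} [Category.{v₁} I]

variable {obj : I → Type u₂} [∀ i, Category.{v₂} (obj i)]

variable {objY : I → Type u₂} [∀ i, Category.{v₂} (objY i)]

/-- The data induced from the oplax functor `X` by the adjoint pairs `(L_i, R_i)`:
`Y(a) := L_j X(a) R_i`, `η'_i := ζ_i ∘ (L_i η_i R_i)` and
`θ'_{b,a} := (L_k X(b) ε_j X(a) R_i) ∘ (L_k θ_{b,a} R_i)`. -/
def inducedByAdjointPairs (X : OplaxOn obj)
    (L : ∀ i : I, obj i ⥤ objY i) (R : ∀ i : I, objY i ⥤ obj i)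
    (adj : ∀ i : I, L i ⊣ R i) : OplaxOn objY where
  map {i j} a := R i ⋙ X.map a ⋙ L j
  eta i :=
    Functor.whiskerLeft (R i) (Functor.whiskerRight (X.eta i) (L i)) ≫ (adj i).counit
  theta {i j k} a b :=
    Functor.whiskerLeft (R i) (Functor.whiskerRight (X.theta a b) (L k)) ≫
      Functor.whiskerLeft (R i ⋙ X.map a) (Functor.whiskerRight (adj j).unit (X.map b ⋙ L k))

/-- Given an oplax functor `X : I → Cat` and adjoint pairs
`L_i ⊣ R_i` (`L_i : X(i) ⥤ Y(i)`, `R_i : Y(i) ⥤ X(i)`), the induced data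
`Y = (Y, η', θ')` is an oplax functor `I → Cat`. -/
theorem inducedByAdjointPairs_isOplax (X : OplaxOn obj) (hX : X.IsOplax)
    (L : ∀ i : I, obj i ⥤ objY i) (R : ∀ i : I, objY i ⥤ obj i)
    (adj : ∀ i : I, L i ⊣ R i) :
    (inducedByAdjointPairs X L R adj).IsOplax := by
  obtain ⟨h1, h2, h3⟩ := hX
  refine ⟨fun {i j} a => ?_, fun {i j} a => ?_, fun {i j k l} a b c => ?_⟩
  · ext y
    simp only [eqToHom_app]
    have e1 := NatTrans.congr_app (h1 a) ((R i).obj y)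
    simp [inducedByAdjointPairs] at e1 ⊢
    simp only [← Functor.map_comp]
    rw [Functor.map_comp (R i), ← Functor.comp_map (L i) (R i),
      ← (adj i).unit.naturality_assoc]
    simp [Adjunction.right_triangle_components, e1, eqToHom_map]
  · ext y
    simp only [eqToHom_app]
    have e2 := NatTrans.congr_app (h2 a) ((R i).obj y)
    simp [inducedByAdjointPairs] at e2 ⊢
    slice_lhs 2 3 => rw [← Functor.map_comp, (X.eta j).naturality]
    simp only [Functor.id_map, Functor.map_comp, Category.assoc,
      Adjunction.left_triangle_components, Category.comp_id]
    simp [← Functor.map_comp, e2, eqToHom_map]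
  · ext y
    simp only [NatTrans.comp_app, eqToHom_app]
    have e3 := NatTrans.congr_app (h3 a b c) ((R i).obj y)
    simp [inducedByAdjointPairs] at e3 ⊢
    slice_lhs 2 3 => rw [← Functor.map_comp, (X.theta b c).naturality]
    have key := (adj k).unit_naturality
      ((X.theta a b).app ((R i).obj y) ≫
        (X.map b).map ((adj j).unit.app ((X.map a).obj ((R i).obj y))))
    simp only [← Functor.map_comp, Category.assoc]
    rw [key, reassoc_of% e3]
    simp [eqToHom_map, Functor.comp_map, Functor.map_comp]
end

section
/- Let X = (X, η, θ) : I → Cat be an oplax functor, and for each object i of I let L_i : X(i) → Y(i) be a functor with right adjoint R_i : Y(i) → X(i), unit ε_i and counit ζ_i; let Y = (Y, η', θ') be the induced oplax functor with Y(a) := L_j X(a) R_i, η'_i := ζ_i ∘ (L_i η_i R_i), θ'_{b,a} := (L_k X(b) ε_j X(a) R_i) ∘ (L_k θ_{b,a} R_i). Then the family (R_i)_{i} extends to a left transformation (R, φ^R) : Y → X in Oplax(I, Cat), where R(i) := R_i for each object i and φ^R(a) := ε_j X(a) R_i : X(a)R_i ⇒ R_j L_j X(a) R_i = R(j)Y(a)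 for each a : i → j. -/
/-!
Statement 15: given an oplax functor `X : I → Cat` and adjoint pairs `L_i ⊣ R_i`,
the family `(R_i)_i` extends to a left transformation `(R, φ^R) : Y → X` from the
induced oplax functor `Y` (`Y(a) = L_j X(a) R_i`) to `X`, with `φ^R(a) := ε_j X(a) R_i`.
-/


open CategoryTheory

universe v₂ u₂ v₁ u₁

variable {I : Type u₁} [Category.{v₁} I]

variable {obj : I → Type u₂} [∀ i, Category.{v₂} (obj i)]
variable {objY : I → Type u₂} [∀ i, Category.{v₂} (objY i)]

/-- Data of a left transformation between oplax functors `I → Cat`. -/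
structure LTOn {obj : I → Type u₂} [∀ i, Category.{v₂} (obj i)]
    {obj' : I → Type u₂} [∀ i, Category.{v₂} (obj' i)]
    (X : OplaxOn obj) (X' : OplaxOn obj') where
  app : ∀ i : I, obj i ⥤ obj' i
  psi : ∀ {i j : I} (a : i ⟶ j), app i ⋙ X'.map a ⟶ X.map a ⋙ app j

/-- The axioms for a left transformation between oplax functors `I → Cat`. -/
def LTOn.IsLT {obj : I → Type u₂} [∀ i, Category.{v₂} (obj i)]
    {obj' : I → Type u₂} [∀ i, Category.{v₂} (obj' i)]
    {X : OplaxOn obj} {X' : OplaxOn obj'} (F : LTOn X X') : Prop :=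
  (∀ i : I,
      F.psi (𝟙 i) ≫ Functor.whiskerRight (X.eta i) (F.app i)
        = Functor.whiskerLeft (F.app i) (X'.eta i) ≫
            eqToHom (by rw [Functor.comp_id, Functor.id_comp])) ∧
  (∀ {i j k : I} (a : i ⟶ j) (b : j ⟶ k),
      Functor.whiskerLeft (F.app i) (X'.theta a b) ≫ eqToHom (Functor.assoc _ _ _).symm ≫
          Functor.whiskerRight (F.psi a) (X'.map b) ≫ eqToHom (Functor.assoc _ _ _) ≫
          Functor.whiskerLeft (X.map a) (F.psi b)
        = F.psi (a ≫ b) ≫ Functor.whiskerRight (X.theta a b) (F.app k) ≫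
            eqToHom (Functor.assoc _ _ _))

/-- The extension `(R, φ^R) : Y → X` of the family `(R_i)_i`, with
`φ^R(a) := ε_j X(a) R_i`. -/
def adjointPairsRightLT (X : OplaxOn obj)
    (L : ∀ i : I, obj i ⥤ objY i) (R : ∀ i : I, objY i ⥤ obj i)
    (adj : ∀ i : I, L i ⊣ R i) :
    LTOn (inducedByAdjointPairs X L R adj) X where
  app i := R i
  psi {i j} a := Functor.whiskerLeft (R i ⋙ X.map a) (adj j).unit


/-- Given an oplax functor `X : I → Cat` and adjoint pairs
`L_i ⊣ R_i` (with unit `ε_i`, counit `ζ_i`), let `Y` be the induced oplax functor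
(`Y(a) = L_j X(a) R_i`).  Then the family `(R_i)_i`, together with
`φ^R(a) := ε_j X(a) R_i`, is a left transformation `(R, φ^R) : Y → X`. -/
theorem adjointPairsRightLT_isLT (X : OplaxOn obj) (hX : X.IsOplax)
    (L : ∀ i : I, obj i ⥤ objY i) (R : ∀ i : I, objY i ⥤ obj i)
    (adj : ∀ i : I, L i ⊣ R i) :
    (adjointPairsRightLT X L R adj).IsLT := by
  obtain ⟨h1, h2, h3⟩ := hX
  constructor
  · intro i
    ext x
    have := congrArg (fun t => NatTrans.app t ((R i).obj x)) (h2 (𝟙 i))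
    simp [adjointPairsRightLT, inducedByAdjointPairs] at this ⊢
  · intro i j k a b
    ext x
    simp [adjointPairsRightLT, inducedByAdjointPairs]
end

section
/- Let X = (X, η, θ) : I → Cat be an oplax functor, and for each object i of I let L_i : X(i) → Y(i) be a functor with right adjoint R_i : Y(i) → X(i), unit ε_i and counit ζ_i; let Y = (Y, η', θ') be the induced oplax functor with Y(a) := L_j X(a) R_i, and let (R, φ^R) : Y → X be the left transformation with R(i) := R_i and φ^R(a) := ε_j X(a) R_i. Assume moreover that every unit ε_i is a natural isomorphism. Then: (a) every φ^R(a) is a natural isomorphism, i.e., (R, φ^R) is I-equivariant; and (b) the family (L_i)_i extends to an I-equivariant left transformation (L, φ^L) : X → Y, where L(i) := L_i for each object i and φ^L(a) := L_j X(a) ε_i^{-1} : Y(a)L_i = L_j X(a) R_i L_i ⇒ L_j X(a) = L(j)X(a) for each a : i → j, and every φ^L(a) is a natural isomorphism. -/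
/-!
Statement 16: given an oplax functor `X : I → Cat` and adjoint pairs `L_i ⊣ R_i`
whose units `ε_i` are all natural isomorphisms, the left transformation
`(R, φ^R) : Y → X` is `I`-equivariant (all `φ^R(a)` are isomorphisms), and the
family `(L_i)_i` extends to an `I`-equivariant left transformation
`(L, φ^L) : X → Y` with `φ^L(a) := L_j X(a) ε_i⁻¹`.
-/


open CategoryTheory

universe v₂ u₂ v₁ u₁

variable {I : Type u₁} [Category.{v₁} I]

variable {obj : I → Type u₂} [∀ i, Category.{v₂} (obj i)]
variable {objY : I → Type u₂} [∀ i, Category.{v₂} (objY i)]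

/-- The extension `(L, φ^L) : X → Y` of the family `(L_i)_i`, with
`φ^L(a) := L_j X(a) ε_i⁻¹`, defined when every unit `ε_i` is an isomorphism. -/
noncomputable def adjointPairsLeftLT (X : OplaxOn obj)
    (L : ∀ i : I, obj i ⥤ objY i) (R : ∀ i : I, objY i ⥤ obj i)
    (adj : ∀ i : I, L i ⊣ R i) (hu : ∀ i : I, IsIso (adj i).unit) :
    LTOn X (inducedByAdjointPairs X L R adj) where
  app i := L i
  psi {i j} a :=
    haveI := hu i
    Functor.whiskerRight (inv (adj i).unit) (X.map a ⋙ L j)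

/-- Given an oplax functor `X : I → Cat` and adjoint pairs
`L_i ⊣ R_i` with all units `ε_i` natural isomorphisms:
(a) every `φ^R(a)` is an isomorphism, i.e. `(R, φ^R) : Y → X` is `I`-equivariant;
(b) the family `(L_i)_i`, together with `φ^L(a) := L_j X(a) ε_i⁻¹`, is a left
transformation `(L, φ^L) : X → Y`, and every `φ^L(a)` is an isomorphism,
i.e. `(L, φ^L)` is `I`-equivariant. -/
theorem adjointPairs_equivariance (X : OplaxOn obj) (hX : X.IsOplax)
    (L : ∀ i : I, obj i ⥤ objY i) (R : ∀ i : I, objY i ⥤ obj i)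
    (adj : ∀ i : I, L i ⊣ R i) (hu : ∀ i : I, IsIso (adj i).unit) :
    (∀ {i j : I} (a : i ⟶ j), IsIso ((adjointPairsRightLT X L R adj).psi a)) ∧
    (adjointPairsLeftLT X L R adj hu).IsLT ∧
    (∀ {i j : I} (a : i ⟶ j), IsIso ((adjointPairsLeftLT X L R adj hu).psi a)) := by
  refine ⟨?_, ⟨?_, ?_⟩, ?_⟩
  · intro i j a
    have := hu j
    haveI : ∀ x, IsIso (((adjointPairsRightLT X L R adj).psi a).app x) := by
      intro x; dsimp [adjointPairsRightLT]; exact NatIso.isIso_app_of_isIso (adj j).unit _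
    exact NatIso.isIso_of_isIso_app _
  · intro i
    have := hu i
    ext x
    simp [adjointPairsLeftLT, inducedByAdjointPairs, ← Functor.map_comp_assoc,
      NatTrans.naturality]
  · intro i j k a b
    have := hu i
    have := hu j
    ext x
    simp [adjointPairsLeftLT, inducedByAdjointPairs]
    rw [← Functor.map_comp_assoc, NatTrans.naturality]
    simp only [Functor.comp_map, Functor.map_comp, Category.assoc, ← Functor.map_inv]
    simp only [← Functor.map_comp]
    congr 1
    rw [← Adjunction.unit_naturality_assoc]
    simp [← Functor.map_comp]
  · intro i j a
    have := hu i
    dsimp [adjointPairsLeftLT]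
    exact Functor.isIso_whiskerRight _ _
end
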